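/- arXiv:2406.03550 — 7 statements merged into one kernel-verified Lean document; each statement's English description precedes it below -/
import Mathlib

section
/- Let V be a finite-dimensional real vector space and Σ : V → End(V) a linear map that is symmetric in the sense that Σ(u)(v) = Σ(v)(u) for all u, v ∈ V. For an alternating multilinear map α : V^k → V define δ_Σα : V^{k+1} → V by δ_Σα(v₀,…,v_k) = Σ_{i=0}^{k} (−1)^i (Σ(v_i)·α)(v₀,…,v̂_i,…,v_k). Then for all v₀,…,v_k ∈ V one has δ_Σα(v₀,…,v_k) = Σ_{i=0}^{k} (−1)^i Σ(α(v₀,…,v̂_i,…,v_k))(v_i). In particular, if h ⊆ End(V) is a subspace with Σ(v) ∈ h for all v ∈ V, then δ_Σα lies in h∧Λ^kV*. -/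
section ShiftAux

variable {V : Type*} [AddCommGroup V] [Module ℝ V]

omit [Module ℝ V] in
private lemma shiftAux_removeNth_update_succAbove {k : ℕ} (p : Fin (k+1)) (j : Fin k)
    (f : Fin (k+1) → V) (x : V) :
    p.removeNth (Function.update f (p.succAbove j) x) = Function.update (p.removeNth f) j x := by
  ext i
  simp only [Fin.removeNth]
  rcases eq_or_ne i j with rfl | h
  · simp
  · rw [Function.update_of_ne h, Function.update_of_ne
      (fun hh => h (Fin.succAbove_right_injective hh))]
    rfl

private lemma shiftAux_keyA {k : ℕ} (α : AlternatingMap ℝ V V (Fin k)) :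
    ∀ n : ℕ, ∀ q p : Fin (k+1), (q : ℕ) = n → p < q → ∀ u : Fin (k+1) → V, u p = u q →
      α (p.removeNth u) = ((-1 : ℝ) ^ ((p:ℕ) + (q:ℕ) + 1)) • α (q.removeNth u) := by
  intro n
  induction n using Nat.strong_induction_on with
  | _ n IH =>
    intro q p hn hpq u hu
    subst hn
    have hv : (p:ℕ) < (q:ℕ) := hpq
    by_cases hadj : (p:ℕ) + 1 = (q:ℕ)
    · -- adjacent case
      have hrm : p.removeNth u = q.removeNth u := by
        funext j
        simp only [Fin.removeNth]
        have hc : (j.castSucc : ℕ) = (j : ℕ) := rfl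
        have hs : (j.succ : ℕ) = (j : ℕ) + 1 := rfl
        rcases lt_or_ge (j.castSucc) p with hj | hj
        · rw [Fin.succAbove_of_castSucc_lt _ _ hj, Fin.succAbove_of_castSucc_lt _ _ (hj.trans hpq)]
        · have hj' : (p:ℕ) ≤ (j : ℕ) := by have := Fin.le_def.mp hj; omega
          rcases lt_or_ge (j.castSucc) q with hj2 | hj2
          · have hj2' : (j : ℕ) < (q:ℕ) := by have := Fin.lt_def.mp hj2; omega
            have hjp : j.castSucc = p := Fin.ext (by omega)
            have hjq : j.succ = q := Fin.ext (by omega)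
            rw [Fin.succAbove_of_le_castSucc _ _ hj, Fin.succAbove_of_castSucc_lt _ _ hj2,
              hjq, hjp, hu]
          · rw [Fin.succAbove_of_le_castSucc _ _ hj, Fin.succAbove_of_le_castSucc _ _ hj2]
      have hsign : ((-1 : ℝ) ^ ((p:ℕ) + (q:ℕ) + 1)) = 1 :=
        Even.neg_one_pow ⟨(p:ℕ) + 1, by omega⟩
      rw [hrm, hsign, one_smul]
    · -- non-adjacent case
      have hqlt := q.isLt
      obtain ⟨r, hrval⟩ : ∃ r : Fin (k+1), (r:ℕ) = (q:ℕ) - 1 := ⟨⟨(q:ℕ)-1, by omega⟩, rfl⟩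
      have hpr : p < r := by rw [Fin.lt_def, hrval]; omega
      have hrq : r < q := by rw [Fin.lt_def, hrval]; omega
      have hrnq : r ≠ q := Fin.ne_of_lt hrq
      have hpnr : p ≠ r := Fin.ne_of_lt hpr
      have hpnq : p ≠ q := Fin.ne_of_lt hpq
      set u' : Fin (k+1) → V := u ∘ ⇑(Equiv.swap r q) with hu'
      have step1 : q.removeNth u = r.removeNth u' := by
        funext j
        simp only [Fin.removeNth, hu', Function.comp_apply]
        have hc : (j.castSucc : ℕ) = (j : ℕ) := rfl
        have hs : (j.succ : ℕ) = (j : ℕ) + 1 := rfl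
        by_cases h1 : (j : ℕ) < (r:ℕ)
        · have e1 : q.succAbove j = j.castSucc :=
            Fin.succAbove_of_castSucc_lt _ _ (by rw [Fin.lt_def]; omega)
          have e2 : r.succAbove j = j.castSucc :=
            Fin.succAbove_of_castSucc_lt _ _ (by rw [Fin.lt_def]; omega)
          rw [e1, e2, Equiv.swap_apply_of_ne_of_ne
            (by rw [Fin.ne_iff_vne]; omega) (by rw [Fin.ne_iff_vne]; omega)]
        · by_cases h2 : (j : ℕ) = (r:ℕ)
          · have e1 : q.succAbove j = j.castSucc :=
              Fin.succAbove_of_castSucc_lt _ _ (by rw [Fin.lt_def]; omega)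
            have e2 : r.succAbove j = j.succ :=
              Fin.succAbove_of_le_castSucc _ _ (by rw [Fin.le_def]; omega)
            have hjq : j.succ = q := Fin.ext (by omega)
            have hjr : j.castSucc = r := Fin.ext (by omega)
            rw [e1, e2, hjq, Equiv.swap_apply_right, hjr]
          · have e1 : q.succAbove j = j.succ :=
              Fin.succAbove_of_le_castSucc _ _ (by rw [Fin.le_def]; omega)
            have e2 : r.succAbove j = j.succ :=
              Fin.succAbove_of_le_castSucc _ _ (by rw [Fin.le_def]; omega)
            rw [e1, e2, Equiv.swap_apply_of_ne_of_ne
              (by rw [Fin.ne_iff_vne]; omega) (by rw [Fin.ne_iff_vne]; omega)]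
      obtain ⟨jr, hjr⟩ := Fin.exists_succAbove_eq (show r ≠ p from hpnr.symm)
      obtain ⟨jq, hjq⟩ := Fin.exists_succAbove_eq (show q ≠ p from hpnq.symm)
      have hjrjq : jr ≠ jq := fun hh => hrnq (by rw [← hjr, ← hjq, hh])
      have step2 : p.removeNth u' = (p.removeNth u) ∘ ⇑(Equiv.swap jr jq) := by
        funext j
        simp only [Fin.removeNth, hu', Function.comp_apply]
        by_cases hj1 : j = jr
        · subst hj1
          rw [hjr, Equiv.swap_apply_left, Equiv.swap_apply_left, hjq]
        · by_cases hj2 : j = jq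
          · subst hj2
            rw [hjq, Equiv.swap_apply_right, Equiv.swap_apply_right, hjr]
          · rw [Equiv.swap_apply_of_ne_of_ne hj1 hj2,
              Equiv.swap_apply_of_ne_of_ne
                (fun hh => hj1 (Fin.succAbove_right_injective (hh.trans hjr.symm)))
                (fun hh => hj2 (Fin.succAbove_right_injective (hh.trans hjq.symm)))]
      have hps : α (p.removeNth u') = - α (p.removeNth u) := by
        rw [step2]; exact α.map_swap _ hjrjq
      have hu'pr : u' p = u' r := by
        simp only [hu', Function.comp_apply, Equiv.swap_apply_left,
          Equiv.swap_apply_of_ne_of_ne hpnr hpnq]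
        exact hu
      have hIH := IH ((q:ℕ) - 1) (by omega) r p hrval hpr u' hu'pr
      rw [← step1, hps] at hIH
      have hexp : (p:ℕ) + (q:ℕ) + 1 = ((p:ℕ) + (r:ℕ) + 1) + 1 := by omega
      rw [hexp, pow_succ, mul_comm ((-1:ℝ) ^ ((p:ℕ) + (r:ℕ) + 1)) (-1 : ℝ), mul_smul,
        ← hIH, neg_one_smul, neg_neg]

private lemma shiftAux_keyZero {k : ℕ} (Sig : V →ₗ[ℝ] V →ₗ[ℝ] V)
    (hsym : ∀ u v : V, Sig u v = Sig v u)
    (α : AlternatingMap ℝ V V (Fin k))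
    (keyA : ∀ q p : Fin (k+1), p < q → ∀ u : Fin (k+1) → V, u p = u q →
      α (p.removeNth u) = ((-1 : ℝ) ^ ((p:ℕ) + (q:ℕ) + 1)) • α (q.removeNth u))
    (hB : ∀ (p : Fin (k+1)) (j : Fin k) (f : Fin (k+1) → V) (x : V),
      p.removeNth (Function.update f (p.succAbove j) x) = Function.update (p.removeNth f) j x)
    (v : Fin (k+1) → V) :
    ∑ i : Fin (k + 1), ((-1 : ℝ) ^ (i : ℕ)) •
        ∑ j : Fin k,
          α (Function.update (i.removeNth v) j (Sig (v i) (i.removeNth v j))) = 0 := by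
  set G : Fin (k+1) → Fin (k+1) → V := fun p q =>
    ((-1 : ℝ) ^ (p : ℕ)) • α (p.removeNth (Function.update v q (Sig (v p) (v q)))) with hG
  have anti_lt : ∀ p q : Fin (k+1), p < q → G p q + G q p = 0 := by
    intro p q hpq
    have hne : p ≠ q := Fin.ne_of_lt hpq
    set X : V := Sig (v p) (v q) with hX
    set u : Fin (k+1) → V := Function.update (Function.update v p X) q X with hudef
    have h1 : Fin.removeNth p (Function.update v q X) = Fin.removeNth p u := by
      rw [hudef, Function.update_comm hne, Fin.removeNth_update]
    have h2 : Fin.removeNth q (Function.update v p X) = Fin.removeNth q u := by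
      rw [hudef, Fin.removeNth_update]
    have hup : u p = u q := by
      rw [hudef, Function.update_of_ne hne, Function.update_self, Function.update_self]
    have hA := keyA q p hpq u hup
    have e1 : G p q = ((-1 : ℝ) ^ (p : ℕ)) • α (Fin.removeNth p u) := by
      simp only [hG]; rw [← hX, h1]
    have e2 : G q p = ((-1 : ℝ) ^ (q : ℕ)) • α (Fin.removeNth q u) := by
      simp only [hG]
      rw [hsym (v q) (v p), ← hX, h2]
    rw [e1, e2, hA, smul_smul, ← add_smul]
    have hc : ((-1:ℝ) ^ (p:ℕ) * (-1:ℝ) ^ ((p:ℕ) + (q:ℕ) + 1) + (-1:ℝ) ^ (q:ℕ)) = 0 := by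
      rw [← pow_add]
      have h2' : (p:ℕ) + ((p:ℕ) + (q:ℕ) + 1) = 2 * (p:ℕ) + 1 + (q:ℕ) := by omega
      rw [h2', pow_add, pow_add, pow_mul, neg_one_sq, one_pow, one_mul, pow_one]
      ring
    rw [hc, zero_smul]
  have anti : ∀ p q : Fin (k+1), p ≠ q → G p q + G q p = 0 := by
    intro p q hne
    rcases lt_or_gt_of_ne hne with h | h
    · exact anti_lt p q h
    · rw [add_comm]; exact anti_lt q p h
  have hT : (∑ p : Fin (k+1), ∑ q : Fin (k+1), G p q) = ∑ p : Fin (k+1), G p p := by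
    have key : ∀ p q : Fin (k+1), G p q + G q p = (if q = p then G p p + G p p else 0) := by
      intro p q
      by_cases hqp : q = p
      · subst hqp; rw [if_pos rfl]
      · rw [if_neg hqp]; exact anti p q (fun hh => hqp hh.symm)
    have h2T : (∑ p : Fin (k+1), ∑ q : Fin (k+1), G p q) + (∑ p : Fin (k+1), ∑ q : Fin (k+1), G p q)
        = (∑ p : Fin (k+1), G p p) + (∑ p : Fin (k+1), G p p) := by
      calc (∑ p : Fin (k+1), ∑ q : Fin (k+1), G p q) + (∑ p : Fin (k+1), ∑ q : Fin (k+1), G p q)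
          = (∑ p : Fin (k+1), ∑ q : Fin (k+1), G p q)
            + (∑ p : Fin (k+1), ∑ q : Fin (k+1), G q p) := by
            congr 1
            exact Finset.sum_comm
        _ = ∑ p : Fin (k+1), ∑ q : Fin (k+1), (G p q + G q p) := by
            rw [← Finset.sum_add_distrib]
            exact Finset.sum_congr rfl fun p _ => (Finset.sum_add_distrib).symm
        _ = ∑ p : Fin (k+1), ∑ q : Fin (k+1), (if q = p then G p p + G p p else 0) := by
            exact Finset.sum_congr rfl fun p _ => Finset.sum_congr rfl fun q _ => key p q
        _ = ∑ p : Fin (k+1), (G p p + G p p) := by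
            refine Finset.sum_congr rfl fun p _ => ?_
            simp
        _ = (∑ p : Fin (k+1), G p p) + (∑ p : Fin (k+1), G p p) := Finset.sum_add_distrib
    have h2T' : (2:ℝ) • (∑ p : Fin (k+1), ∑ q : Fin (k+1), G p q)
        = (2:ℝ) • (∑ p : Fin (k+1), G p p) := by
      rw [two_smul, two_smul]; exact h2T
    exact smul_right_injective V (by norm_num : (2:ℝ) ≠ 0) h2T'
  have hterm : ∀ (i : Fin (k+1)) (j : Fin k),
      α (Function.update (i.removeNth v) j (Sig (v i) (i.removeNth v j)))
        = α (i.removeNth (Function.update v (i.succAbove j) (Sig (v i) (v (i.succAbove j))))) := by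
    intro i j
    rw [hB]
    rfl
  calc ∑ i : Fin (k + 1), ((-1 : ℝ) ^ (i : ℕ)) •
        ∑ j : Fin k, α (Function.update (i.removeNth v) j (Sig (v i) (i.removeNth v j)))
      = ∑ i : Fin (k+1), ∑ j : Fin k, G i (i.succAbove j) := by
        refine Finset.sum_congr rfl fun i _ => ?_
        rw [Finset.smul_sum]
        exact Finset.sum_congr rfl fun j _ => by rw [hterm]
    _ = ∑ i : Fin (k+1), ((∑ q : Fin (k+1), G i q) - G i i) := by
        refine Finset.sum_congr rfl fun i _ => ?_
        rw [Fin.sum_univ_succAbove (G i) i, add_sub_cancel_left]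
    _ = (∑ p : Fin (k+1), ∑ q : Fin (k+1), G p q) - ∑ p : Fin (k+1), G p p :=
        Finset.sum_sub_distrib _ _
    _ = 0 := by rw [hT, sub_self]

private theorem shiftAux_main {k : ℕ}
    (Sig : V →ₗ[ℝ] V →ₗ[ℝ] V)
    (hsym : ∀ u v : V, Sig u v = Sig v u)
    (α : AlternatingMap ℝ V V (Fin k))
    (hzero : ∀ v : Fin (k+1) → V, ∑ i : Fin (k + 1), ((-1 : ℝ) ^ (i : ℕ)) •
        ∑ j : Fin k,
          α (Function.update (i.removeNth v) j (Sig (v i) (i.removeNth v j))) = 0)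
    (v : Fin (k + 1) → V) :
    (∑ i : Fin (k + 1), ((-1 : ℝ) ^ (i : ℕ)) •
        (Sig (v i) (α (i.removeNth v)) -
          ∑ j : Fin k,
            α (Function.update (i.removeNth v) j (Sig (v i) (i.removeNth v j))))) =
    ∑ i : Fin (k + 1), ((-1 : ℝ) ^ (i : ℕ)) • Sig (α (i.removeNth v)) (v i) := by
  simp only [smul_sub]
  rw [Finset.sum_sub_distrib, hzero v, sub_zero]
  exact Finset.sum_congr rfl fun i _ => by rw [hsym]

private theorem shiftAux_part2
    {V : Type*} [AddCommGroup V] [Module ℝ V] [FiniteDimensional ℝ V] (k : ℕ)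
    (Sig : V →ₗ[ℝ] V →ₗ[ℝ] V)
    (α : AlternatingMap ℝ V V (Fin k))
    (h : Submodule ℝ (V →ₗ[ℝ] V)) (hmem : ∀ v : V, Sig v ∈ h) :
    ((fun v : Fin (k + 1) → V =>
        ∑ i : Fin (k + 1), ((-1 : ℝ) ^ (i : ℕ)) • Sig (α (i.removeNth v)) (v i)) ∈
      Submodule.span ℝ
        {f : (Fin (k + 1) → V) → V |
          ∃ X ∈ h, ∃ ω : AlternatingMap ℝ V ℝ (Fin k),
            f = fun v : Fin (k + 1) → V =>
              ∑ i : Fin (k + 1), ((-1 : ℝ) ^ (i : ℕ)) • ω (i.removeNth v) • X (v i)}) := by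
  set b := Module.finBasis ℝ V with hb
  have hrepr : (fun v : Fin (k + 1) → V =>
      ∑ i : Fin (k + 1), ((-1 : ℝ) ^ (i : ℕ)) • Sig (α (i.removeNth v)) (v i))
      = ∑ c : Fin (Module.finrank ℝ V), (fun v : Fin (k + 1) → V =>
          ∑ i : Fin (k + 1), ((-1 : ℝ) ^ (i : ℕ)) •
            ((b.coord c).compAlternatingMap α) (i.removeNth v) • (Sig (b c)) (v i)) := by
    funext v
    rw [Finset.sum_apply, Finset.sum_comm]
    refine Finset.sum_congr rfl fun i _ => ?_
    rw [← Finset.smul_sum]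
    congr 1
    have hx := b.sum_repr (α (i.removeNth v))
    calc Sig (α (i.removeNth v)) (v i)
        = Sig (∑ c, b.repr (α (i.removeNth v)) c • b c) (v i) := by rw [hx]
      _ = ∑ c, ((b.coord c).compAlternatingMap α) (i.removeNth v) • (Sig (b c)) (v i) := by
          rw [map_sum, LinearMap.coe_sum, Finset.sum_apply]
          refine Finset.sum_congr rfl fun c _ => ?_
          rw [map_smul, LinearMap.smul_apply]
          simp [Module.Basis.coord_apply]
  rw [hrepr]
  exact Submodule.sum_mem _ fun c _ =>
    Submodule.subset_span ⟨Sig (b c), hmem (b c), (b.coord c).compAlternatingMap α, rfl⟩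
end ShiftAux

/-- For a symmetric (torsion-free) `Σ : V → End(V)` and an alternating `α : Λ^k V* ⊗ V`,
the antisymmetrised action `δ_Σ α (v₀,…,v_k) = Σᵢ (−1)ⁱ (Σ(vᵢ)·α)(v₀,…,v̂ᵢ,…,v_k)` equals
`Σᵢ (−1)ⁱ Σ(α(v₀,…,v̂ᵢ,…,v_k))(vᵢ)`; in particular if `Σ` takes values in a subspace
`h ⊆ End(V)` then `δ_Σ α` lies in `h ∧ Λ^k V*`. -/
theorem shift_by_torsion_free_lies_in_wedge
    (V : Type*) [AddCommGroup V] [Module ℝ V] [FiniteDimensional ℝ V] (k : ℕ)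
    (Sig : V →ₗ[ℝ] V →ₗ[ℝ] V)
    (hsym : ∀ u v : V, Sig u v = Sig v u)
    (α : AlternatingMap ℝ V V (Fin k)) :
    (∀ v : Fin (k + 1) → V,
      (∑ i : Fin (k + 1), ((-1 : ℝ) ^ (i : ℕ)) •
          (Sig (v i) (α (i.removeNth v)) -
            ∑ j : Fin k,
              α (Function.update (i.removeNth v) j (Sig (v i) (i.removeNth v j))))) =
      ∑ i : Fin (k + 1), ((-1 : ℝ) ^ (i : ℕ)) • Sig (α (i.removeNth v)) (v i)) ∧
    ∀ h : Submodule ℝ (V →ₗ[ℝ] V), (∀ v : V, Sig v ∈ h) →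
      ((fun v : Fin (k + 1) → V =>
          ∑ i : Fin (k + 1), ((-1 : ℝ) ^ (i : ℕ)) •
            (Sig (v i) (α (i.removeNth v)) -
              ∑ j : Fin k,
                α (Function.update (i.removeNth v) j (Sig (v i) (i.removeNth v j))))) ∈
        Submodule.span ℝ
          {f : (Fin (k + 1) → V) → V |
            ∃ X ∈ h, ∃ ω : AlternatingMap ℝ V ℝ (Fin k),
              f = fun v : Fin (k + 1) → V =>
                ∑ i : Fin (k + 1), ((-1 : ℝ) ^ (i : ℕ)) • ω (i.removeNth v) • X (v i)}) := by

  have hzero : ∀ v : Fin (k+1) → V, ∑ i : Fin (k + 1), ((-1 : ℝ) ^ (i : ℕ)) •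
      ∑ j : Fin k,
        α (Function.update (i.removeNth v) j (Sig (v i) (i.removeNth v j))) = 0 :=
    shiftAux_keyZero Sig hsym α (fun q p hpq => shiftAux_keyA α (q : ℕ) q p rfl hpq)
      shiftAux_removeNth_update_succAbove
  have hmain := shiftAux_main Sig hsym α hzero
  refine ⟨hmain, fun h hmem => ?_⟩
  rw [funext hmain]
  exact shiftAux_part2 k Sig α h hmem
end

section
/- Let V be a finite-dimensional real vector space, h ⊆ End(V) a subspace, and R : V × V → End(V) a bilinear map with R(u,v) = −R(v,u) and R(u,v) ∈ h for all u, v ∈ V, satisfying the algebraic Bianchi identity R(u,v)(w) + R(v,w)(u) + R(w,u)(v) = 0 for all u, v, w ∈ V. For an alternating multilinear map α : V^k → V define δ_Rα : V^{k+2} → V by δ_Rα(v₀,…,v_{k+1}) = Σ_{0≤i<j≤k+1} (−1)^{i+j} (R(v_i,v_j)·α)(v₀,…,v̂_i,…,v̂_j,…,v_{k+1}). Then δ_Rα lies in h∧Λ^{k+1}V*. -/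
namespace CurvWedgeAux

variable {V : Type*} [AddCommGroup V] [Module ℝ V]

lemma val_succAbove {n : ℕ} (p : Fin (n+1)) (i : Fin n) :
    (p.succAbove i : ℕ) = if (i : ℕ) < (p : ℕ) then (i : ℕ) else (i : ℕ) + 1 := by
  rcases lt_or_ge (Fin.castSucc i) p with hc | hc
  · rw [Fin.succAbove_of_castSucc_lt _ _ hc, if_pos (by simpa [Fin.lt_def] using hc)]
    simp
  · rw [Fin.succAbove_of_le_castSucc _ _ hc, if_neg (by simp [Fin.le_def] at hc; omega)]
    simp

lemma map_update_eq {W : Type*} [AddCommGroup W] [Module ℝ W] {m : ℕ}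
    (α : AlternatingMap ℝ V W (Fin (m+1))) (w : Fin (m+1) → V) (l : Fin (m+1)) (x : V) :
    α (Function.update w l x) = (-1 : ℝ) ^ (l : ℕ) • α (Fin.cons x (l.removeNth w)) := by
  have hcomp : (Function.update w l x) ∘ ⇑(Fin.cycleRange l)⁻¹ = Fin.cons x (l.removeNth w) := by
    funext j
    induction j using Fin.cases with
    | zero =>
        rw [Function.comp_apply, Equiv.Perm.inv_def, Fin.cycleRange_symm_zero,
          Function.update_self, Fin.cons_zero]
    | succ t =>
        rw [Function.comp_apply, Equiv.Perm.inv_def, Fin.cycleRange_symm_succ, Fin.cons_succ,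
          Function.update_apply, if_neg (Fin.succAbove_ne l t)]
        rfl
  have h1 : α (Fin.cons x (l.removeNth w)) =
      Equiv.Perm.sign (Fin.cycleRange l)⁻¹ • α (Function.update w l x) := by
    rw [← hcomp, AlternatingMap.map_perm]
  rw [h1]
  have h2 : Equiv.Perm.sign (Fin.cycleRange l)⁻¹ = (-1) ^ (l : ℕ) := by simp
  rw [h2]
  rcases Nat.even_or_odd (l : ℕ) with he | ho
  · rw [he.neg_one_pow, he.neg_one_pow]; simp
  · rw [ho.neg_one_pow, ho.neg_one_pow]; simp


/-- The increasing enumeration of the complement of `{i,j}` (when `i ≠ j`). -/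
def E2 {n : ℕ} (i j : Fin (n+2)) : Fin n → Fin (n+2) := fun l =>
  ⟨(l : ℕ) + (if min (i : ℕ) (j : ℕ) ≤ (l : ℕ) then 1 else 0)
      + (if max (i : ℕ) (j : ℕ) ≤ (l : ℕ) + 1 then 1 else 0),
    by have := l.isLt; split_ifs <;> omega⟩

lemma E2_comm {n : ℕ} (i j : Fin (n+2)) : E2 i j = E2 j i := by
  funext l; simp [E2, min_comm, max_comm]

lemma frame2 {n : ℕ} (p : Fin (n+2)) (q : Fin (n+1)) :
    (fun l => p.succAbove (q.succAbove l)) = E2 p (p.succAbove q) := by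
  funext l
  apply Fin.ext
  simp only [E2, val_succAbove]
  split_ifs <;> omega

lemma succAbove_mk_of_lt {n : ℕ} (i j : Fin (n+2)) (hij : (i : ℕ) < (j : ℕ))
    (pf : (i : ℕ) < n + 1) : j.succAbove ⟨(i : ℕ), pf⟩ = i := by
  apply Fin.ext
  rw [val_succAbove]
  simp [hij]


/-- The increasing enumeration of the complement of `{i,j,m}` (pairwise distinct). -/
def E3 {n : ℕ} (i j m : Fin (n+3)) : Fin n → Fin (n+3) := fun l =>
  ⟨(l : ℕ) + (if min (i : ℕ) (min (j : ℕ) (m : ℕ)) ≤ (l : ℕ) then 1 else 0)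
      + (if (i : ℕ) + (j : ℕ) + (m : ℕ) - min (i : ℕ) (min (j : ℕ) (m : ℕ))
            - max (i : ℕ) (max (j : ℕ) (m : ℕ)) ≤ (l : ℕ) + 1 then 1 else 0)
      + (if max (i : ℕ) (max (j : ℕ) (m : ℕ)) ≤ (l : ℕ) + 2 then 1 else 0),
    by have := l.isLt; split_ifs <;> omega⟩

lemma E3_cyc {n : ℕ} (i j m : Fin (n+3)) : E3 i j m = E3 j m i := by
  funext l
  apply Fin.ext
  simp only [E3]
  split_ifs <;> omega

lemma E3_swap {n : ℕ} (i j m : Fin (n+3)) : E3 i j m = E3 j i m := by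
  funext l
  apply Fin.ext
  simp only [E3]
  split_ifs <;> omega

set_option maxHeartbeats 2000000 in
lemma frame3 {n : ℕ} (j : Fin (n+3)) (q : Fin (n+2)) (l : Fin (n+1)) :
    (fun l' => j.succAbove (q.succAbove (l.succAbove l')))
      = E3 j (j.succAbove q) (j.succAbove (q.succAbove l)) := by
  funext l'
  apply Fin.ext
  simp only [E3, val_succAbove]
  split_ifs <;> omega

/-- Parity sign of the arrangement `(i, j, m)`. -/
def eps {n : ℕ} (i j m : Fin n) : ℝ :=
  (if (i : ℕ) < (j : ℕ) then 1 else -1) * (if (j : ℕ) < (m : ℕ) then 1 else -1)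
    * (if (i : ℕ) < (m : ℕ) then 1 else -1)

lemma eps_cyc {n : ℕ} {i j m : Fin n} (h1 : (i : ℕ) ≠ (j : ℕ)) (h2 : (j : ℕ) ≠ (m : ℕ))
    (h3 : (i : ℕ) ≠ (m : ℕ)) : eps i j m = eps j m i := by
  simp only [eps]
  split_ifs <;> (try norm_num) <;> omega

lemma eps_swap {n : ℕ} {i j m : Fin n} (h1 : (i : ℕ) ≠ (j : ℕ)) (h2 : (j : ℕ) ≠ (m : ℕ))
    (h3 : (i : ℕ) ≠ (m : ℕ)) : eps i j m = - eps j i m := by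
  simp only [eps]
  split_ifs <;> (try norm_num) <;> omega


lemma removeNth_update_succAbove {n : ℕ} {β : Type*} [DecidableEq (Fin (n+1))] [DecidableEq (Fin n)] (q : Fin (n+1)) (t : Fin n) (z : β)
    (w : Fin (n+1) → β) :
    q.removeNth (Function.update w (q.succAbove t) z) = Function.update (q.removeNth w) t z := by
  funext i
  simp only [Fin.removeNth, Function.update_apply, Fin.succAbove_right_inj]

variable {W : Type*} [AddCommGroup W] [Module ℝ W]

/-- One piece `w ↦ B (w q) (α (w with q-th removed))` of the contraction, as a multilinear map. -/
def piece {k : ℕ} (B : V →ₗ[ℝ] V →ₗ[ℝ] W) (α : AlternatingMap ℝ V V (Fin k))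
    (q : Fin (k+1)) : MultilinearMap ℝ (fun _ : Fin (k+1) => V) W where
  toFun w := B (w q) (α (q.removeNth w))
  map_update_add' := by
    intro _ w i x y
    have hrm : ∀ z, q.removeNth (Function.update w q z) = q.removeNth w := by
      intro z; funext r
      simp [Fin.removeNth, Function.update_apply, Fin.succAbove_ne]
    rcases eq_or_ne i q with rfl | hne
    · rw [hrm, hrm, hrm]
      simp
    · obtain ⟨t, rfl⟩ := Fin.exists_succAbove_eq hne
      rw [Function.update_apply, Function.update_apply, Function.update_apply]
      rw [if_neg (Ne.symm (Fin.succAbove_ne q t)), if_neg (Ne.symm (Fin.succAbove_ne q t)),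
        if_neg (Ne.symm (Fin.succAbove_ne q t))]
      rw [removeNth_update_succAbove, removeNth_update_succAbove, removeNth_update_succAbove]
      rw [AlternatingMap.map_update_add]
      simp
  map_update_smul' := by
    intro _ w i c x
    have hrm : ∀ z, q.removeNth (Function.update w q z) = q.removeNth w := by
      intro z; funext r
      simp [Fin.removeNth, Function.update_apply, Fin.succAbove_ne]
    rcases eq_or_ne i q with rfl | hne
    · rw [hrm, hrm]
      simp
    · obtain ⟨t, rfl⟩ := Fin.exists_succAbove_eq hne
      rw [Function.update_apply, Function.update_apply]
      rw [if_neg (Ne.symm (Fin.succAbove_ne q t)), if_neg (Ne.symm (Fin.succAbove_ne q t))]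
      rw [removeNth_update_succAbove, removeNth_update_succAbove]
      rw [AlternatingMap.map_update_smul]
      simp

/-- The contraction `β(w₀,…,w_k) = Σ_q (−1)^q B(w_q, α(w with q-th removed))`,
as an alternating map. -/
def contractionAlt {k : ℕ} (B : V →ₗ[ℝ] V →ₗ[ℝ] W) (α : AlternatingMap ℝ V V (Fin k)) :
    AlternatingMap ℝ V W (Fin (k+1)) where
  toMultilinearMap := ∑ q : Fin (k+1), ((-1 : ℝ) ^ (q : ℕ)) • piece B α q
  map_eq_zero_of_eq' := by
    intro w s t hws hst
    show (∑ q : Fin (k+1), ((-1 : ℝ) ^ (q : ℕ)) • piece B α q) w = 0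
    rw [MultilinearMap.sum_apply]
    suffices H : ∀ s t : Fin (k+1), s < t → w s = w t →
        (∑ q : Fin (k+1), (-1 : ℝ) ^ (q : ℕ) • (piece B α q) w) = 0 by
      rcases lt_or_gt_of_ne hst with hlt | hgt
      · exact H s t hlt hws
      · exact H t s hgt hws.symm
    clear hws hst s t
    intro s t hst hws
    have hsub : ({s, t} : Finset (Fin (k+1))) ⊆ Finset.univ := Finset.subset_univ _
    rw [← Finset.sum_subset hsub]; swap
    · intro q _ hq
      simp only [Finset.mem_insert, Finset.mem_singleton, not_or] at hq
      obtain ⟨i₁, hi₁⟩ := Fin.exists_succAbove_eq (Ne.symm hq.1)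
      obtain ⟨i₂, hi₂⟩ := Fin.exists_succAbove_eq (Ne.symm hq.2)
      have hne : i₁ ≠ i₂ := by
        intro hcon; rw [hcon, hi₂] at hi₁; exact hst.ne hi₁.symm
      have hval : (q.removeNth w) i₁ = (q.removeNth w) i₂ := by
        simp only [Fin.removeNth, hi₁, hi₂, hws]
      have : α (q.removeNth w) = 0 := α.map_eq_zero_of_eq _ hval hne
      show ((-1 : ℝ) ^ (q : ℕ)) • B (w q) (α (q.removeNth w)) = 0
      rw [this]
      simp
    rw [Finset.sum_pair hst.ne]
    show ((-1 : ℝ) ^ (s : ℕ)) • B (w s) (α (s.removeNth w))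
        + ((-1 : ℝ) ^ (t : ℕ)) • B (w t) (α (t.removeNth w)) = 0
    cases k with
    | zero => exact absurd (Fin.ext (by omega)) hst.ne
    | succ k =>
      have hts : (s : ℕ) < (t : ℕ) := hst
      have ht1 : (t : ℕ) - 1 < k + 1 := by omega
      have hs1 : (s : ℕ) < k + 1 := by omega
      set t1 : Fin (k+1) := ⟨(t : ℕ) - 1, ht1⟩ with ht1def
      set s1 : Fin (k+1) := ⟨(s : ℕ), hs1⟩ with hs1def
      have hst1 : s.succAbove t1 = t := by
        apply Fin.ext
        rw [val_succAbove]
        simp only [ht1def]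
        rw [if_neg (by omega)]
        omega
      have hts1 : t.succAbove s1 = s := by
        apply Fin.ext
        rw [val_succAbove]
        simp only [hs1def]
        rw [if_pos (by omega)]
      have h1 : α (s.removeNth w) =
          ((-1 : ℝ) ^ ((t : ℕ) - 1)) • α (Fin.cons (w s) (t1.removeNth (s.removeNth w))) := by
        have hupd : s.removeNth w = Function.update (s.removeNth w) t1 (w s) := by
          have : w s = (s.removeNth w) t1 := by
            simp only [Fin.removeNth, hst1, hws]
          rw [this, Function.update_eq_self]
        rw [hupd, map_update_eq]
        rw [Fin.removeNth_update]
      have h2 : α (t.removeNth w) =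
          ((-1 : ℝ) ^ (s : ℕ)) • α (Fin.cons (w s) (s1.removeNth (t.removeNth w))) := by
        have hupd : t.removeNth w = Function.update (t.removeNth w) s1 (w s) := by
          have : w s = (t.removeNth w) s1 := by
            simp only [Fin.removeNth, hts1]
          rw [this, Function.update_eq_self]
        rw [hupd, map_update_eq]
        rw [Fin.removeNth_update]
      have hcore : t1.removeNth (s.removeNth w) = s1.removeNth (t.removeNth w) := by
        funext l
        show w (s.succAbove (t1.succAbove l)) = w (t.succAbove (s1.succAbove l))
        congr 1
        apply Fin.ext
        simp only [val_succAbove, ht1def, hs1def]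
        split_ifs <;> omega
      rw [h1, h2, hcore, ← hws]
      rw [LinearMap.map_smul, LinearMap.map_smul]
      rw [smul_smul, smul_smul, ← pow_add, ← pow_add]
      rw [← add_smul]
      have hsign : (-1 : ℝ) ^ ((s : ℕ) + ((t : ℕ) - 1)) + (-1 : ℝ) ^ ((t : ℕ) + (s : ℕ)) = 0 := by
        have hexp : (t : ℕ) + (s : ℕ) = ((s : ℕ) + ((t : ℕ) - 1)) + 1 := by omega
        rw [hexp, pow_succ]
        ring
      rw [hsign, zero_smul]

lemma contractionAlt_apply {k : ℕ} (B : V →ₗ[ℝ] V →ₗ[ℝ] W) (α : AlternatingMap ℝ V V (Fin k))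
    (w : Fin (k+1) → V) :
    contractionAlt B α w = ∑ q : Fin (k+1), ((-1 : ℝ) ^ (q : ℕ)) • B (w q) (α (q.removeNth w)) := by
  change (∑ q : Fin (k+1), ((-1 : ℝ) ^ (q : ℕ)) • piece B α q) w = _
  rw [MultilinearMap.sum_apply]
  simp [piece]


section Main

variable {k : ℕ} (Rc : V →ₗ[ℝ] V →ₗ[ℝ] (V →ₗ[ℝ] V))
  (α : AlternatingMap ℝ V V (Fin k)) (v : Fin (k+2) → V)

/-- The summand of `δ_R α` for an (ordered) pair `(i,j)`. -/
def aTerm (i j : Fin (k+2)) : V :=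
  if (i : ℕ) < (j : ℕ) then
    ((-1 : ℝ) ^ ((i : ℕ) + (j : ℕ))) • Rc (v i) (v j) (α (v ∘ E2 i j)) else 0

/-- The summand of the wedge-type term, extended off the diagonal. -/
def rTerm (p m : Fin (k+2)) : V :=
  if (m : ℕ) < (p : ℕ) then
    ((-1 : ℝ) ^ ((p : ℕ) + (m : ℕ))) • Rc (v m) (α (v ∘ E2 p m)) (v p)
  else if (p : ℕ) < (m : ℕ) then
    (-((-1 : ℝ) ^ ((p : ℕ) + (m : ℕ)))) • Rc (v m) (α (v ∘ E2 p m)) (v p)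
  else 0

variable (hanti : ∀ u v : V, Rc u v = - Rc v u)
  (hbianchi : ∀ u v w : V, Rc u v w + Rc v w u + Rc w u v = 0)

include hanti hbianchi in
lemma stepA_pair (i j : Fin (k+2)) :
    aTerm Rc α v i j + aTerm Rc α v j i = rTerm Rc α v i j + rTerm Rc α v j i := by
  have aux : ∀ i j : Fin (k+2), (i : ℕ) < (j : ℕ) →
      aTerm Rc α v i j + aTerm Rc α v j i = rTerm Rc α v i j + rTerm Rc α v j i := by
    intro i j hij
    simp only [aTerm, rTerm, if_pos hij, if_neg (by omega : ¬ (j : ℕ) < (i : ℕ)),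
      if_neg (by omega : ¬ (i : ℕ) < (i : ℕ))]
    rw [E2_comm j i]
    set x := α (v ∘ E2 i j) with hx
    have key : Rc (v i) (v j) x = Rc (v i) x (v j) - Rc (v j) x (v i) := by
      have h1 : Rc x (v i) = - Rc (v i) x := hanti x (v i)
      have h2 := hbianchi (v i) (v j) x
      rw [h1] at h2
      simp only [LinearMap.neg_apply] at h2
      rw [add_neg_eq_zero] at h2
      rw [eq_sub_iff_add_eq]
      exact h2
    rw [key]
    rw [Nat.add_comm (j : ℕ) (i : ℕ)]
    rw [smul_sub, neg_smul]
    abel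
  rcases lt_trichotomy (i : ℕ) (j : ℕ) with hlt | heq | hgt
  · exact aux i j hlt
  · have : i = j := Fin.ext heq
    subst this
    simp [aTerm, rTerm]
  · rw [add_comm (aTerm Rc α v i j), add_comm (rTerm Rc α v i j)]
    exact aux j i hgt

lemma stepA_inner (p : Fin (k+2)) :
    ((-1 : ℝ) ^ (p : ℕ)) • ∑ q : Fin (k+1), ((-1 : ℝ) ^ (q : ℕ)) •
        Rc (v (p.succAbove q)) (α (fun l => v (p.succAbove (q.succAbove l)))) (v p)
      = ∑ m : Fin (k+2), rTerm Rc α v p m := by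
  rw [Fin.sum_univ_succAbove (fun m => rTerm Rc α v p m) p]
  have hpp : rTerm Rc α v p p = 0 := by
    simp [rTerm]
  rw [hpp, zero_add, Finset.smul_sum]
  apply Finset.sum_congr rfl
  intro q _
  have hframe : (fun l => v (p.succAbove (q.succAbove l))) = v ∘ E2 p (p.succAbove q) := by
    rw [← frame2]
    rfl
  rw [hframe]
  rcases lt_or_ge (q : ℕ) (p : ℕ) with hq | hq
  · have hm : ((p.succAbove q : Fin (k+2)) : ℕ) = (q : ℕ) := by
      rw [val_succAbove, if_pos hq]
    rw [rTerm, if_pos (by omega)]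
    rw [hm, smul_smul, ← pow_add]
  · have hm : ((p.succAbove q : Fin (k+2)) : ℕ) = (q : ℕ) + 1 := by
      rw [val_succAbove, if_neg (by omega)]
    rw [rTerm, if_neg (by omega), if_pos (by omega)]
    rw [hm, smul_smul]
    congr 1
    rw [← pow_add]
    have : (p : ℕ) + ((q : ℕ) + 1) = ((p : ℕ) + (q : ℕ)) + 1 := by omega
    rw [this, pow_succ, pow_add]
    ring

include hanti hbianchi in
lemma stepA (hV : ∀ (x : V), (2 : ℝ) • x = 0 → x = 0) :
    (∑ j : Fin (k+2), ∑ i : Fin (k+2), aTerm Rc α v i j)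
      = ∑ p : Fin (k+2), ∑ m : Fin (k+2), rTerm Rc α v p m := by
  have hswap : (∑ j : Fin (k+2), ∑ i : Fin (k+2), aTerm Rc α v i j)
      = ∑ j : Fin (k+2), ∑ i : Fin (k+2), aTerm Rc α v j i := Finset.sum_comm
  have hswap2 : (∑ p : Fin (k+2), ∑ m : Fin (k+2), rTerm Rc α v p m)
      = ∑ p : Fin (k+2), ∑ m : Fin (k+2), rTerm Rc α v m p := Finset.sum_comm
  have hdouble : (∑ j : Fin (k+2), ∑ i : Fin (k+2), aTerm Rc α v i j)
        + (∑ j : Fin (k+2), ∑ i : Fin (k+2), aTerm Rc α v i j)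
      = (∑ p : Fin (k+2), ∑ m : Fin (k+2), rTerm Rc α v p m)
        + (∑ p : Fin (k+2), ∑ m : Fin (k+2), rTerm Rc α v p m) := by
    nth_rewrite 2 [hswap]
    nth_rewrite 2 [hswap2]
    rw [← Finset.sum_add_distrib, ← Finset.sum_add_distrib]
    apply Finset.sum_congr rfl
    intro j _
    rw [← Finset.sum_add_distrib, ← Finset.sum_add_distrib]
    apply Finset.sum_congr rfl
    intro i _
    rw [add_comm (rTerm Rc α v j i)]
    exact stepA_pair Rc α v hanti hbianchi i j
  have hz : (2 : ℝ) • ((∑ j : Fin (k+2), ∑ i : Fin (k+2), aTerm Rc α v i j)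
      - ∑ p : Fin (k+2), ∑ m : Fin (k+2), rTerm Rc α v p m) = 0 := by
    rw [smul_sub, two_smul, two_smul, hdouble, sub_self]
  have := hV _ hz
  exact sub_eq_zero.mp this

end Main

section BPart

variable {k : ℕ} (Rc : V →ₗ[ℝ] V →ₗ[ℝ] (V →ₗ[ℝ] V))
  (α : AlternatingMap ℝ V V (Fin (k+1))) (v : Fin (k+3) → V)

/-- Cube extension of the "lower order" terms. -/
def dTerm (i j m : Fin (k+3)) : V :=
  if hd : (i : ℕ) ≠ (j : ℕ) ∧ (j : ℕ) ≠ (m : ℕ) ∧ (i : ℕ) ≠ (m : ℕ) then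
    (eps i j m * (-1 : ℝ) ^ ((i : ℕ) + (j : ℕ) + (m : ℕ))) •
      α (Fin.cons (Rc (v i) (v j) (v m)) (v ∘ E3 i j m))
  else 0

variable (hanti : ∀ u v : V, Rc u v = - Rc v u)
  (hbianchi : ∀ u v w : V, Rc u v w + Rc v w u + Rc w u v = 0)

include hbianchi in
lemma dTerm_cyc (i j m : Fin (k+3)) :
    dTerm Rc α v i j m + dTerm Rc α v j m i + dTerm Rc α v m i j = 0 := by
  by_cases hd : (i : ℕ) ≠ (j : ℕ) ∧ (j : ℕ) ≠ (m : ℕ) ∧ (i : ℕ) ≠ (m : ℕ)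
  · obtain ⟨h1, h2, h3⟩ := hd
    rw [dTerm, dTerm, dTerm, dif_pos ⟨h1, h2, h3⟩, dif_pos ⟨h2, Ne.symm h3, Ne.symm h1⟩,
      dif_pos ⟨Ne.symm h3, h1, Ne.symm h2⟩]
    rw [← E3_cyc i j m, ← E3_cyc j m i, ← E3_cyc i j m]
    rw [← eps_cyc h1 h2 h3, ← eps_cyc h2 (Ne.symm h3) (Ne.symm h1), ← eps_cyc h1 h2 h3]
    rw [show (j : ℕ) + (m : ℕ) + (i : ℕ) = (i : ℕ) + (j : ℕ) + (m : ℕ) from by omega,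
      show (m : ℕ) + (i : ℕ) + (j : ℕ) = (i : ℕ) + (j : ℕ) + (m : ℕ) from by omega]
    rw [← smul_add, ← smul_add]
    have hadd : ∀ x y : V, α (Fin.cons x (v ∘ E3 i j m)) + α (Fin.cons y (v ∘ E3 i j m))
        = α (Fin.cons (x + y) (v ∘ E3 i j m)) :=
      fun x y => (α.toMultilinearMap.cons_add (v ∘ E3 i j m) x y).symm
    rw [hadd, hadd, hbianchi (v i) (v j) (v m)]
    rw [α.map_coord_zero (i := 0) (by simp)]
    simp
  · have hz : ∀ a b c : Fin (k+3),
        ¬ ((a : ℕ) ≠ (b : ℕ) ∧ (b : ℕ) ≠ (c : ℕ) ∧ (a : ℕ) ≠ (c : ℕ)) →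
        dTerm Rc α v a b c = 0 := by
      intro a b c hc
      rw [dTerm, dif_neg hc]
    rw [hz i j m hd, hz j m i (by omega), hz m i j (by omega)]
    simp

include hanti in
lemma dTerm_swap (i j m : Fin (k+3)) : dTerm Rc α v i j m = dTerm Rc α v j i m := by
  by_cases hd : (i : ℕ) ≠ (j : ℕ) ∧ (j : ℕ) ≠ (m : ℕ) ∧ (i : ℕ) ≠ (m : ℕ)
  · obtain ⟨h1, h2, h3⟩ := hd
    rw [dTerm, dTerm, dif_pos ⟨h1, h2, h3⟩, dif_pos ⟨Ne.symm h1, h3, h2⟩]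
    rw [eps_swap h1 h2 h3, ← E3_swap i j m]
    rw [show (j : ℕ) + (i : ℕ) + (m : ℕ) = (i : ℕ) + (j : ℕ) + (m : ℕ) from by omega]
    have hres : Rc (v i) (v j) (v m) = - Rc (v j) (v i) (v m) := by
      rw [hanti (v i) (v j)]
      simp
    rw [hres]
    have hneg : α (Fin.cons (- Rc (v j) (v i) (v m)) (v ∘ E3 i j m))
        = - α (Fin.cons (Rc (v j) (v i) (v m)) (v ∘ E3 i j m)) := by
      have hupd : ∀ z : V, (Fin.cons z (v ∘ E3 i j m) : Fin (k+1) → V)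
          = Function.update (Fin.cons (Rc (v j) (v i) (v m)) (v ∘ E3 i j m) : Fin (k+1) → V)
              0 z :=
        fun z => by
          funext r
          induction r using Fin.cases with
          | zero => simp
          | succ t => simp [Function.update_apply, Fin.succ_ne_zero]
      rw [hupd, show - Rc (v j) (v i) (v m) = (-1 : ℝ) • Rc (v j) (v i) (v m) from by simp,
        α.map_update_smul, hupd]
      simp [Function.update_eq_self]
    rw [hneg]
    rw [neg_mul, neg_smul, smul_neg, neg_neg]
  · rw [dTerm, dTerm, dif_neg hd, dif_neg (by omega)]


lemma stepB_inner (i j : Fin (k+3)) (hij : (i : ℕ) < (j : ℕ)) (pf : (i : ℕ) < k+2) :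
    (∑ m : Fin (k+3), dTerm Rc α v i j m)
      = ((-1 : ℝ) ^ ((i : ℕ) + (j : ℕ))) • ∑ l : Fin (k+1),
          α (Function.update (Fin.removeNth ⟨(i : ℕ), pf⟩ (j.removeNth v)) l
              (Rc (v i) (v j) (Fin.removeNth ⟨(i : ℕ), pf⟩ (j.removeNth v) l))) := by
  rw [Fin.sum_univ_succAbove (fun m => dTerm Rc α v i j m) j]
  have hjj : dTerm Rc α v i j j = 0 := by rw [dTerm, dif_neg (by omega)]
  rw [hjj, zero_add]
  rw [Fin.sum_univ_succAbove (fun t => dTerm Rc α v i j (j.succAbove t)) ⟨(i : ℕ), pf⟩]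
  have hji : j.succAbove ⟨(i : ℕ), pf⟩ = i := succAbove_mk_of_lt i j hij pf
  have hii : dTerm Rc α v i j (j.succAbove ⟨(i : ℕ), pf⟩) = 0 := by
    rw [hji, dTerm, dif_neg (by omega)]
  rw [hii, zero_add, Finset.smul_sum]
  apply Finset.sum_congr rfl
  intro l _
  have hmne1 : ((j.succAbove ((⟨(i : ℕ), pf⟩ : Fin (k+2)).succAbove l)) : ℕ) ≠ (j : ℕ) := by
    intro hc
    exact Fin.succAbove_ne j _ (Fin.ext hc)
  have hmne2 : ((j.succAbove ((⟨(i : ℕ), pf⟩ : Fin (k+2)).succAbove l)) : ℕ) ≠ (i : ℕ) := by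
    intro hc
    have : j.succAbove ((⟨(i : ℕ), pf⟩ : Fin (k+2)).succAbove l) = j.succAbove ⟨(i : ℕ), pf⟩ := by
      rw [hji]; exact Fin.ext hc
    rw [Fin.succAbove_right_inj] at this
    exact Fin.succAbove_ne _ l this
  rw [dTerm, dif_pos ⟨by omega, fun hc => hmne1 hc.symm, fun hc => hmne2 hc.symm⟩]
  have hwl : Fin.removeNth (⟨(i : ℕ), pf⟩ : Fin (k+2)) (j.removeNth v) l
      = v (j.succAbove ((⟨(i : ℕ), pf⟩ : Fin (k+2)).succAbove l)) := rfl
  rw [hwl, map_update_eq]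
  have hcore : l.removeNth (Fin.removeNth (⟨(i : ℕ), pf⟩ : Fin (k+2)) (j.removeNth v))
      = v ∘ E3 i j (j.succAbove ((⟨(i : ℕ), pf⟩ : Fin (k+2)).succAbove l)) := by
    have h3 := frame3 j (⟨(i : ℕ), pf⟩ : Fin (k+2)) l
    rw [hji] at h3
    rw [E3_swap]
    funext l'
    show v (j.succAbove ((⟨(i : ℕ), pf⟩ : Fin (k+2)).succAbove (l.succAbove l'))) = _
    rw [show j.succAbove ((⟨(i : ℕ), pf⟩ : Fin (k+2)).succAbove (l.succAbove l'))
      = E3 j i (j.succAbove ((⟨(i : ℕ), pf⟩ : Fin (k+2)).succAbove l)) l' from congrFun h3 l']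
    rfl
  rw [hcore, smul_smul]
  congr 1
  set m := j.succAbove ((⟨(i : ℕ), pf⟩ : Fin (k+2)).succAbove l) with hm
  rcases lt_or_ge (l : ℕ) (i : ℕ) with h1 | h1
  · have hmv : (m : ℕ) = (l : ℕ) := by
      simp only [hm, val_succAbove]
      split_ifs <;> omega
    simp only [eps]
    rw [if_pos hij, if_neg (by omega), if_neg (by omega), hmv, pow_add]
    ring
  · rcases lt_or_ge ((l : ℕ) + 1) (j : ℕ) with h2 | h2
    · have hmv : (m : ℕ) = (l : ℕ) + 1 := by
        simp only [hm, val_succAbove]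
        split_ifs <;> omega
      simp only [eps]
      rw [if_pos hij, if_neg (by omega), if_pos (by omega), hmv]
      rw [show (i : ℕ) + (j : ℕ) + ((l : ℕ) + 1) = ((i : ℕ) + (j : ℕ) + (l : ℕ)) + 1 from by
        omega, pow_succ, pow_add]
      ring
    · have hmv : (m : ℕ) = (l : ℕ) + 2 := by
        simp only [hm, val_succAbove]
        split_ifs <;> omega
      simp only [eps]
      rw [if_pos hij, if_pos (by omega), if_pos (by omega), hmv]
      rw [show (i : ℕ) + (j : ℕ) + ((l : ℕ) + 2) = ((i : ℕ) + (j : ℕ) + (l : ℕ)) + 2 from by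
        omega, pow_add, pow_add]
      ring

lemma sum_rot {N : ℕ} {M : Type*} [AddCommMonoid M] (f : Fin N → Fin N → Fin N → M) :
    (∑ a : Fin N, ∑ b : Fin N, ∑ c : Fin N, f a b c)
      = ∑ a : Fin N, ∑ b : Fin N, ∑ c : Fin N, f c a b :=
  calc (∑ a : Fin N, ∑ b : Fin N, ∑ c : Fin N, f a b c)
      = ∑ b : Fin N, ∑ a : Fin N, ∑ c : Fin N, f a b c := Finset.sum_comm
    _ = ∑ b : Fin N, ∑ c : Fin N, ∑ a : Fin N, f a b c :=
        Finset.sum_congr rfl (fun b _ => Finset.sum_comm)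

include hanti hbianchi in
lemma stepB (hV2 : ∀ x : V, (2 : ℝ) • x = 0 → x = 0) (hV3 : ∀ x : V, (3 : ℝ) • x = 0 → x = 0) :
    (∑ j : Fin (k+3), ∑ i : Fin (k+3),
        if hij : (i : ℕ) < (j : ℕ) then
          ((-1 : ℝ) ^ ((i : ℕ) + (j : ℕ))) • ∑ l : Fin (k+1),
            α (Function.update
                (Fin.removeNth ⟨(i : ℕ), lt_of_lt_of_le hij (Nat.lt_succ_iff.mp j.isLt)⟩
                  (j.removeNth v)) l
                (Rc (v i) (v j)
                  (Fin.removeNth ⟨(i : ℕ), lt_of_lt_of_le hij (Nat.lt_succ_iff.mp j.isLt)⟩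
                    (j.removeNth v) l)))
        else 0) = 0 := by
  have hrot : (∑ a : Fin (k+3), ∑ b : Fin (k+3), ∑ c : Fin (k+3), dTerm Rc α v b a c)
      = ∑ a : Fin (k+3), ∑ b : Fin (k+3), ∑ c : Fin (k+3), dTerm Rc α v a c b :=
    sum_rot (fun a b c => dTerm Rc α v b a c)
  have hrot2 : (∑ a : Fin (k+3), ∑ b : Fin (k+3), ∑ c : Fin (k+3), dTerm Rc α v a c b)
      = ∑ a : Fin (k+3), ∑ b : Fin (k+3), ∑ c : Fin (k+3), dTerm Rc α v c b a :=
    sum_rot (fun a b c => dTerm Rc α v a c b)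
  have hT3 : (∑ a : Fin (k+3), ∑ b : Fin (k+3), ∑ c : Fin (k+3), dTerm Rc α v b a c)
        + (∑ a : Fin (k+3), ∑ b : Fin (k+3), ∑ c : Fin (k+3), dTerm Rc α v b a c)
        + (∑ a : Fin (k+3), ∑ b : Fin (k+3), ∑ c : Fin (k+3), dTerm Rc α v b a c) = 0 := by
    nth_rewrite 3 [hrot]
    rw [hrot2]
    nth_rewrite 2 [hrot]
    rw [← Finset.sum_add_distrib, ← Finset.sum_add_distrib]
    rw [show (0 : V) = ∑ a : Fin (k+3), (0 : V) from by simp]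
    apply Finset.sum_congr rfl
    intro a _
    rw [← Finset.sum_add_distrib, ← Finset.sum_add_distrib]
    rw [show (0 : V) = ∑ b : Fin (k+3), (0 : V) from by simp]
    apply Finset.sum_congr rfl
    intro b _
    rw [← Finset.sum_add_distrib, ← Finset.sum_add_distrib]
    rw [show (0 : V) = ∑ c : Fin (k+3), (0 : V) from by simp]
    apply Finset.sum_congr rfl
    intro c _
    exact dTerm_cyc Rc α v hbianchi b a c
  have hT : (∑ a : Fin (k+3), ∑ b : Fin (k+3), ∑ c : Fin (k+3), dTerm Rc α v b a c) = 0 := by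
    apply hV3
    rw [show (3 : ℝ) = 1 + 1 + 1 from by norm_num, add_smul, add_smul, one_smul]
    exact hT3
  -- split the cube sum into the two ordered halves
  have hsplit : (∑ a : Fin (k+3), ∑ b : Fin (k+3), ∑ c : Fin (k+3), dTerm Rc α v b a c)
      = (∑ a : Fin (k+3), ∑ b : Fin (k+3),
          if (b : ℕ) < (a : ℕ) then ∑ c : Fin (k+3), dTerm Rc α v b a c else 0)
        + (∑ a : Fin (k+3), ∑ b : Fin (k+3),
          if (a : ℕ) < (b : ℕ) then ∑ c : Fin (k+3), dTerm Rc α v b a c else 0) := by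
    rw [← Finset.sum_add_distrib]
    apply Finset.sum_congr rfl
    intro a _
    rw [← Finset.sum_add_distrib]
    apply Finset.sum_congr rfl
    intro b _
    rcases lt_trichotomy (b : ℕ) (a : ℕ) with hlt | heq | hgt
    · rw [if_pos hlt, if_neg (by omega), add_zero]
    · rw [if_neg (by omega), if_neg (by omega), add_zero]
      apply Finset.sum_eq_zero
      intro c _
      rw [dTerm, dif_neg (by omega)]
    · rw [if_neg (by omega), if_pos hgt, zero_add]
  have hhalves : (∑ a : Fin (k+3), ∑ b : Fin (k+3),
          if (a : ℕ) < (b : ℕ) then ∑ c : Fin (k+3), dTerm Rc α v b a c else 0)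
      = (∑ a : Fin (k+3), ∑ b : Fin (k+3),
          if (b : ℕ) < (a : ℕ) then ∑ c : Fin (k+3), dTerm Rc α v b a c else 0) := by
    rw [Finset.sum_comm]
    apply Finset.sum_congr rfl
    intro a _
    apply Finset.sum_congr rfl
    intro b _
    rcases lt_or_ge (b : ℕ) (a : ℕ) with h | h
    · rw [if_pos h, if_pos h]
      apply Finset.sum_congr rfl
      intro c _
      exact dTerm_swap Rc α v hanti a b c
    · rw [if_neg (by omega), if_neg (by omega)]
  have hhalf : (∑ a : Fin (k+3), ∑ b : Fin (k+3),
      if (b : ℕ) < (a : ℕ) then ∑ c : Fin (k+3), dTerm Rc α v b a c else 0) = 0 := by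
    apply hV2
    have h' : (∑ a : Fin (k+3), ∑ b : Fin (k+3), ∑ c : Fin (k+3), dTerm Rc α v b a c)
        = (∑ a : Fin (k+3), ∑ b : Fin (k+3),
            if (b : ℕ) < (a : ℕ) then ∑ c : Fin (k+3), dTerm Rc α v b a c else 0)
          + (∑ a : Fin (k+3), ∑ b : Fin (k+3),
            if (b : ℕ) < (a : ℕ) then ∑ c : Fin (k+3), dTerm Rc α v b a c else 0) := by
      rw [hsplit, hhalves]
    rw [two_smul, ← h']
    exact hT
  have hBH : (∑ j : Fin (k+3), ∑ i : Fin (k+3),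
      if hij : (i : ℕ) < (j : ℕ) then
        ((-1 : ℝ) ^ ((i : ℕ) + (j : ℕ))) • ∑ l : Fin (k+1),
          α (Function.update
              (Fin.removeNth ⟨(i : ℕ), lt_of_lt_of_le hij (Nat.lt_succ_iff.mp j.isLt)⟩
                (j.removeNth v)) l
              (Rc (v i) (v j)
                (Fin.removeNth ⟨(i : ℕ), lt_of_lt_of_le hij (Nat.lt_succ_iff.mp j.isLt)⟩
                  (j.removeNth v) l)))
      else 0)
      = ∑ a : Fin (k+3), ∑ b : Fin (k+3),
          if (b : ℕ) < (a : ℕ) then ∑ c : Fin (k+3), dTerm Rc α v b a c else 0 := by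
    apply Finset.sum_congr rfl
    intro j _
    apply Finset.sum_congr rfl
    intro i _
    by_cases hij : (i : ℕ) < (j : ℕ)
    · rw [dif_pos hij, if_pos hij]
      exact (stepB_inner Rc α v i j hij _).symm
    · rw [dif_neg hij, if_neg hij]
  rw [hBH]
  exact hhalf

end BPart


section Assemble

variable {k : ℕ} (Rc : V →ₗ[ℝ] V →ₗ[ℝ] (V →ₗ[ℝ] V))
  (α : AlternatingMap ℝ V V (Fin k)) (v : Fin (k+2) → V)
  (hanti : ∀ u v : V, Rc u v = - Rc v u)
  (hbianchi : ∀ u v w : V, Rc u v w + Rc v w u + Rc w u v = 0)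

include hanti hbianchi in
lemma stepB_all (hV2 : ∀ x : V, (2 : ℝ) • x = 0 → x = 0)
    (hV3 : ∀ x : V, (3 : ℝ) • x = 0 → x = 0) :
    (∑ j : Fin (k+2), ∑ i : Fin (k+2),
        if hij : (i : ℕ) < (j : ℕ) then
          ((-1 : ℝ) ^ ((i : ℕ) + (j : ℕ))) • ∑ l : Fin k,
            α (Function.update
                (Fin.removeNth ⟨(i : ℕ), lt_of_lt_of_le hij (Nat.lt_succ_iff.mp j.isLt)⟩
                  (j.removeNth v)) l
                (Rc (v i) (v j)
                  (Fin.removeNth ⟨(i : ℕ), lt_of_lt_of_le hij (Nat.lt_succ_iff.mp j.isLt)⟩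
                    (j.removeNth v) l)))
        else 0) = 0 := by
  cases k with
  | zero => simp
  | succ k' => exact stepB Rc α v hanti hbianchi hV2 hV3

include hanti hbianchi in
lemma main_pointwise (hV2 : ∀ x : V, (2 : ℝ) • x = 0 → x = 0)
    (hV3 : ∀ x : V, (3 : ℝ) • x = 0 → x = 0) :
    (∑ j : Fin (k + 2), ∑ i : Fin (k + 2),
        if hij : (i : ℕ) < (j : ℕ) then
          (let w : Fin k → V :=
            Fin.removeNth ⟨(i : ℕ), lt_of_lt_of_le hij (Nat.lt_succ_iff.mp j.isLt)⟩
              (j.removeNth v);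
          ((-1 : ℝ) ^ ((i : ℕ) + (j : ℕ))) •
            (Rc (v i) (v j) (α w) -
              ∑ l : Fin k, α (Function.update w l (Rc (v i) (v j) (w l)))))
        else 0)
      = ∑ p : Fin (k+2), ((-1 : ℝ) ^ (p : ℕ)) •
          (∑ q : Fin (k+1), ((-1 : ℝ) ^ (q : ℕ)) •
            Rc (v (p.succAbove q)) (α (fun l => v (p.succAbove (q.succAbove l)))) (v p)) := by
  have hsplit : ∀ j i : Fin (k+2),
      (if hij : (i : ℕ) < (j : ℕ) then
        (let w : Fin k → V :=
          Fin.removeNth ⟨(i : ℕ), lt_of_lt_of_le hij (Nat.lt_succ_iff.mp j.isLt)⟩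
            (j.removeNth v);
        ((-1 : ℝ) ^ ((i : ℕ) + (j : ℕ))) •
          (Rc (v i) (v j) (α w) -
            ∑ l : Fin k, α (Function.update w l (Rc (v i) (v j) (w l)))))
      else 0)
      = aTerm Rc α v i j -
        (if hij : (i : ℕ) < (j : ℕ) then
          ((-1 : ℝ) ^ ((i : ℕ) + (j : ℕ))) • ∑ l : Fin k,
            α (Function.update
                (Fin.removeNth ⟨(i : ℕ), lt_of_lt_of_le hij (Nat.lt_succ_iff.mp j.isLt)⟩
                  (j.removeNth v)) l
                (Rc (v i) (v j)
                  (Fin.removeNth ⟨(i : ℕ), lt_of_lt_of_le hij (Nat.lt_succ_iff.mp j.isLt)⟩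
                    (j.removeNth v) l)))
        else 0) := by
    intro j i
    by_cases hij : (i : ℕ) < (j : ℕ)
    · rw [dif_pos hij, dif_pos hij, aTerm, if_pos hij]
      have hW : Fin.removeNth (⟨(i : ℕ), lt_of_lt_of_le hij (Nat.lt_succ_iff.mp j.isLt)⟩ :
          Fin (k+1)) (j.removeNth v) = v ∘ E2 i j := by
        have h2 := frame2 j (⟨(i : ℕ), lt_of_lt_of_le hij (Nat.lt_succ_iff.mp j.isLt)⟩ :
          Fin (k+1))
        rw [succAbove_mk_of_lt i j hij] at h2
        funext l
        show v (j.succAbove ((⟨(i : ℕ), lt_of_lt_of_le hij (Nat.lt_succ_iff.mp j.isLt)⟩ :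
          Fin (k+1)).succAbove l)) = _
        rw [show j.succAbove ((⟨(i : ℕ), lt_of_lt_of_le hij (Nat.lt_succ_iff.mp j.isLt)⟩ :
          Fin (k+1)).succAbove l) = E2 j i l from congrFun h2 l, E2_comm]
        rfl
      show ((-1 : ℝ) ^ ((i : ℕ) + (j : ℕ))) •
          (Rc (v i) (v j) (α (Fin.removeNth
              (⟨(i : ℕ), lt_of_lt_of_le hij (Nat.lt_succ_iff.mp j.isLt)⟩ : Fin (k+1))
              (j.removeNth v))) -
            ∑ l : Fin k, α (Function.update (Fin.removeNth
              (⟨(i : ℕ), lt_of_lt_of_le hij (Nat.lt_succ_iff.mp j.isLt)⟩ : Fin (k+1))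
              (j.removeNth v)) l
              (Rc (v i) (v j) (Fin.removeNth
                (⟨(i : ℕ), lt_of_lt_of_le hij (Nat.lt_succ_iff.mp j.isLt)⟩ : Fin (k+1))
                (j.removeNth v) l)))) = _
      rw [smul_sub, hW]
    · rw [dif_neg hij, dif_neg hij, aTerm, if_neg hij, sub_zero]
  calc (∑ j : Fin (k + 2), ∑ i : Fin (k + 2),
        if hij : (i : ℕ) < (j : ℕ) then
          (let w : Fin k → V :=
            Fin.removeNth ⟨(i : ℕ), lt_of_lt_of_le hij (Nat.lt_succ_iff.mp j.isLt)⟩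
              (j.removeNth v);
          ((-1 : ℝ) ^ ((i : ℕ) + (j : ℕ))) •
            (Rc (v i) (v j) (α w) -
              ∑ l : Fin k, α (Function.update w l (Rc (v i) (v j) (w l)))))
        else 0)
      = (∑ j : Fin (k+2), ∑ i : Fin (k+2), aTerm Rc α v i j)
        - (∑ j : Fin (k+2), ∑ i : Fin (k+2),
          if hij : (i : ℕ) < (j : ℕ) then
            ((-1 : ℝ) ^ ((i : ℕ) + (j : ℕ))) • ∑ l : Fin k,
              α (Function.update
                  (Fin.removeNth ⟨(i : ℕ), lt_of_lt_of_le hij (Nat.lt_succ_iff.mp j.isLt)⟩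
                    (j.removeNth v)) l
                  (Rc (v i) (v j)
                    (Fin.removeNth ⟨(i : ℕ), lt_of_lt_of_le hij (Nat.lt_succ_iff.mp j.isLt)⟩
                      (j.removeNth v) l)))
          else 0) := by
        rw [← Finset.sum_sub_distrib]
        apply Finset.sum_congr rfl
        intro j _
        rw [← Finset.sum_sub_distrib]
        apply Finset.sum_congr rfl
        intro i _
        exact hsplit j i
    _ = ∑ p : Fin (k+2), ∑ m : Fin (k+2), rTerm Rc α v p m := by
        rw [stepA Rc α v hanti hbianchi hV2, stepB_all Rc α v hanti hbianchi hV2 hV3, sub_zero]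
    _ = ∑ p : Fin (k+2), ((-1 : ℝ) ^ (p : ℕ)) •
          (∑ q : Fin (k+1), ((-1 : ℝ) ^ (q : ℕ)) •
            Rc (v (p.succAbove q)) (α (fun l => v (p.succAbove (q.succAbove l)))) (v p)) := by
        apply Finset.sum_congr rfl
        intro p _
        exact (stepA_inner Rc α v p).symm

end Assemble

end CurvWedgeAux

open CurvWedgeAux in
/-- For a curvature tensor `R : Λ²V → h ⊆ End(V)` satisfying the algebraic Bianchi identity,
and an alternating `α : Λ^k V* ⊗ V`, the double antisymmetrisation
`δ_R α (v₀,…,v_{k+1}) = Σ_{i<j} (−1)^{i+j} (R(vᵢ,vⱼ)·α)(v₀,…,v̂ᵢ,…,v̂ⱼ,…,v_{k+1})`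
lies in `h ∧ Λ^{k+1} V*`. -/
theorem curvature_term_lies_in_wedge
    (V : Type*) [AddCommGroup V] [Module ℝ V] [FiniteDimensional ℝ V] (k : ℕ)
    (h : Submodule ℝ (V →ₗ[ℝ] V))
    (Rc : V →ₗ[ℝ] V →ₗ[ℝ] (V →ₗ[ℝ] V))
    (hanti : ∀ u v : V, Rc u v = - Rc v u)
    (hval : ∀ u v : V, Rc u v ∈ h)
    (hbianchi : ∀ u v w : V, Rc u v w + Rc v w u + Rc w u v = 0)
    (α : AlternatingMap ℝ V V (Fin k)) :
    (fun v : Fin (k + 2) → V =>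
        ∑ j : Fin (k + 2), ∑ i : Fin (k + 2),
          if hij : (i : ℕ) < (j : ℕ) then
            (let w : Fin k → V :=
              Fin.removeNth ⟨(i : ℕ), lt_of_lt_of_le hij (Nat.lt_succ_iff.mp j.isLt)⟩
                (j.removeNth v);
            ((-1 : ℝ) ^ ((i : ℕ) + (j : ℕ))) •
              (Rc (v i) (v j) (α w) -
                ∑ l : Fin k, α (Function.update w l (Rc (v i) (v j) (w l)))))
          else 0) ∈
      Submodule.span ℝ
        {f : (Fin (k + 2) → V) → V |
          ∃ X ∈ h, ∃ ω : AlternatingMap ℝ V ℝ (Fin (k + 1)),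
            f = fun v : Fin (k + 2) → V =>
              ∑ i : Fin (k + 2), ((-1 : ℝ) ^ (i : ℕ)) • ω (i.removeNth v) • X (v i)} := by
  classical
  have hV2 : ∀ x : V, (2 : ℝ) • x = 0 → x = 0 := by
    intro x hx
    have h2 := congrArg (fun y => (2 : ℝ)⁻¹ • y) hx
    simpa [smul_smul] using h2
  have hV3 : ∀ x : V, (3 : ℝ) • x = 0 → x = 0 := by
    intro x hx
    have h3 := congrArg (fun y => (3 : ℝ)⁻¹ • y) hx
    simpa [smul_smul] using h3
  -- the curvature with codomain restricted to `h`
  let Rc2 : V →ₗ[ℝ] V →ₗ[ℝ] h :=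
    { toFun := fun u => LinearMap.codRestrict h (Rc u) (hval u)
      map_add' := by
        intro u1 u2
        ext x
        simp
      map_smul' := by
        intro c u
        ext x
        simp }
  let β : AlternatingMap ℝ V h (Fin (k+1)) := contractionAlt Rc2 α
  let b := Module.finBasis ℝ h
  let ω : Fin (Module.finrank ℝ h) → AlternatingMap ℝ V ℝ (Fin (k+1)) :=
    fun a => (b.coord a).compAlternatingMap β
  have hfun : (fun v : Fin (k + 2) → V =>
        ∑ j : Fin (k + 2), ∑ i : Fin (k + 2),
          if hij : (i : ℕ) < (j : ℕ) then
            (let w : Fin k → V :=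
              Fin.removeNth ⟨(i : ℕ), lt_of_lt_of_le hij (Nat.lt_succ_iff.mp j.isLt)⟩
                (j.removeNth v);
            ((-1 : ℝ) ^ ((i : ℕ) + (j : ℕ))) •
              (Rc (v i) (v j) (α w) -
                ∑ l : Fin k, α (Function.update w l (Rc (v i) (v j) (w l)))))
          else 0)
      = ∑ a : Fin (Module.finrank ℝ h), (fun v : Fin (k + 2) → V =>
          ∑ i : Fin (k + 2), ((-1 : ℝ) ^ (i : ℕ)) •
            (ω a) (i.removeNth v) • ((b a : V →ₗ[ℝ] V) (v i))) := by
    funext v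
    rw [main_pointwise Rc α v hanti hbianchi hV2 hV3]
    have hβcoe : ∀ p : Fin (k+2),
        (∑ q : Fin (k+1), ((-1 : ℝ) ^ (q : ℕ)) •
            Rc (v (p.succAbove q)) (α (fun l => v (p.succAbove (q.succAbove l)))) (v p))
          = ((β (p.removeNth v) : V →ₗ[ℝ] V) (v p)) := by
      intro p
      have happ : (β (p.removeNth v) : V →ₗ[ℝ] V)
          = h.subtype (β (p.removeNth v)) := rfl
      rw [happ, contractionAlt_apply, map_sum, LinearMap.sum_apply]
      apply Finset.sum_congr rfl
      intro q _
      rw [map_smul]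
      rfl
    have hrepr : ∀ p : Fin (k+2), (β (p.removeNth v))
        = ∑ a : Fin (Module.finrank ℝ h), (ω a) (p.removeNth v) • b a := by
      intro p
      have := b.sum_repr (β (p.removeNth v))
      rw [← this]
      apply Finset.sum_congr rfl
      intro a _
      rfl
    calc (∑ p : Fin (k+2), ((-1 : ℝ) ^ (p : ℕ)) •
          ∑ q : Fin (k+1), ((-1 : ℝ) ^ (q : ℕ)) •
            Rc (v (p.succAbove q)) (α (fun l => v (p.succAbove (q.succAbove l)))) (v p))
        = ∑ p : Fin (k+2), ((-1 : ℝ) ^ (p : ℕ)) •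
            ∑ a : Fin (Module.finrank ℝ h),
              (ω a) (p.removeNth v) • ((b a : V →ₗ[ℝ] V) (v p)) := by
          apply Finset.sum_congr rfl
          intro p _
          congr 1
          rw [hβcoe p, hrepr p]
          have : (((∑ a : Fin (Module.finrank ℝ h), (ω a) (p.removeNth v) • b a : h))
              : V →ₗ[ℝ] V) = ∑ a : Fin (Module.finrank ℝ h),
                (ω a) (p.removeNth v) • ((b a : V →ₗ[ℝ] V)) := by
            rw [show ((((∑ a : Fin (Module.finrank ℝ h), (ω a) (p.removeNth v) • b a : h)))
                : V →ₗ[ℝ] V) = h.subtype (∑ a, (ω a) (p.removeNth v) • b a) from rfl,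
              map_sum]
            apply Finset.sum_congr rfl
            intro a _
            rw [map_smul]
            rfl
          rw [this, LinearMap.sum_apply]
          apply Finset.sum_congr rfl
          intro a _
          rw [LinearMap.smul_apply]
      _ = ∑ a : Fin (Module.finrank ℝ h), ∑ p : Fin (k+2), ((-1 : ℝ) ^ (p : ℕ)) •
            (ω a) (p.removeNth v) • ((b a : V →ₗ[ℝ] V) (v p)) := by
          rw [← Finset.sum_comm]
          apply Finset.sum_congr rfl
          intro p _
          rw [Finset.smul_sum]
      _ = (∑ a : Fin (Module.finrank ℝ h), (fun v : Fin (k + 2) → V =>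
            ∑ i : Fin (k + 2), ((-1 : ℝ) ^ (i : ℕ)) •
              (ω a) (i.removeNth v) • ((b a : V →ₗ[ℝ] V) (v i)))) v := by
          rw [Finset.sum_apply]
  rw [hfun]
  apply Submodule.sum_mem
  intro a _
  apply Submodule.subset_span
  exact ⟨(b a : V →ₗ[ℝ] V), (b a).2, ω a, rfl⟩
end

section
/- In the bigraded setting, assume in addition that the Kähler identities d₊d₋† + d₋†d₊ = 0 and d₋d₊† + d₊†d₋ = 0 hold and that Δ₊ = Δ₋. Then for every (p,q) ∈ ℤ², the space V^{p,q} is the orthogonal direct sum of the five subspaces d₊d₋(V^{p−1,q−1}), d₊†d₋(V^{p+1,q−1}), d₊d₋†(V^{p−1,q+1}), d₊†d₋†(V^{p+1,q+1}), and ker Δ ∩ V^{p,q}. -/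
open LinearMap

local notation "⟪" x ", " y "⟫" => @inner ℂ _ _ x y

lemma aux_mem_of_orth {V : Type*} [NormedAddCommGroup V] [InnerProductSpace ℂ V]
    (W : ℤ × ℤ → Submodule ℂ V)
    (hinternal : DirectSum.IsInternal W)
    (horth : ∀ i j : ℤ × ℤ, i ≠ j → ∀ x ∈ W i, ∀ y ∈ W j, (inner ℂ x y : ℂ) = 0)
    (i : ℤ × ℤ) (x : V) (hx : ∀ j : ℤ × ℤ, j ≠ i → ∀ y ∈ W j, (inner ℂ x y : ℂ) = 0) :
    x ∈ W i := by
  set T : Submodule ℂ V := ⨆ j : {j : ℤ × ℤ // j ≠ i}, W j with hT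
  have hsup : W i ⊔ T = ⊤ := by
    rw [eq_top_iff, ← hinternal.submodule_iSup_eq_top]
    refine iSup_le fun j => ?_
    by_cases hj : j = i
    · subst hj; exact le_sup_left
    · exact le_trans (le_iSup (fun j : {j : ℤ × ℤ // j ≠ i} => W j) ⟨j, hj⟩) le_sup_right
  obtain ⟨a, ha, b, hb, hab⟩ := Submodule.mem_sup.mp (hsup ▸ Submodule.mem_top (x := x))
  have hTle : ∀ c ∈ T, ⟪x, c⟫ = 0 ∧ ⟪a, c⟫ = 0 := by
    have h1 : T ≤ (ℂ ∙ x)ᗮ ⊓ (ℂ ∙ a)ᗮ := by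
      refine iSup_le fun j => ?_
      intro y hy
      refine Submodule.mem_inf.mpr ⟨?_, ?_⟩
      · exact Submodule.mem_orthogonal_singleton_iff_inner_right.mpr (hx j j.2 y hy)
      · exact Submodule.mem_orthogonal_singleton_iff_inner_right.mpr
          (horth i j (Ne.symm j.2) a ha y hy)
    intro c hc
    obtain ⟨h2, h3⟩ := Submodule.mem_inf.mp (h1 hc)
    exact ⟨Submodule.mem_orthogonal_singleton_iff_inner_right.mp h2,
      Submodule.mem_orthogonal_singleton_iff_inner_right.mp h3⟩
  have hb0 : b = 0 := by
    have h4 : ⟪b, b⟫ = 0 := by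
      have h5 : ⟪x - a, b⟫ = 0 := by
        rw [inner_sub_left, (hTle b hb).1, ← inner_conj_symm]
        simp [inner_conj_symm, (hTle b hb).2]
      have h6 : x - a = b := by rw [← hab]; abel
      rwa [h6] at h5
    exact inner_self_eq_zero.mp h4
  rw [← hab, hb0, add_zero]
  exact ha

set_option maxHeartbeats 2000000

/-- Filtered Hodge decomposition: in the bigraded setting with the Kähler identities and
`Δ₊ = Δ₋`, each `V^{p,q}` is the orthogonal direct sum of `d₊d₋(V^{p−1,q−1})`,
`d₊†d₋(V^{p+1,q−1})`, `d₊d₋†(V^{p−1,q+1})`, `d₊†d₋†(V^{p+1,q+1})` and the harmonic part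
`ker Δ ∩ V^{p,q}`. -/
theorem filtered_hodge_decomposition
    (V : Type*) [NormedAddCommGroup V] [InnerProductSpace ℂ V] [FiniteDimensional ℂ V]
    (W : ℤ × ℤ → Submodule ℂ V)
    (hinternal : DirectSum.IsInternal W)
    (horth : ∀ i j : ℤ × ℤ, i ≠ j → ∀ x ∈ W i, ∀ y ∈ W j, (inner ℂ x y : ℂ) = 0)
    (dp dm : V →ₗ[ℂ] V)
    (hdp : ∀ p q : ℤ, ∀ x ∈ W (p, q), dp x ∈ W (p + 1, q))
    (hdm : ∀ p q : ℤ, ∀ x ∈ W (p, q), dm x ∈ W (p, q + 1))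
    (hdp2 : dp ∘ₗ dp = 0) (hdm2 : dm ∘ₗ dm = 0)
    (hanticomm : dp ∘ₗ dm + dm ∘ₗ dp = 0)
    (hkahler1 : dp ∘ₗ adjoint dm + adjoint dm ∘ₗ dp = 0)
    (hkahler2 : dm ∘ₗ adjoint dp + adjoint dp ∘ₗ dm = 0)
    (hlap : dp ∘ₗ adjoint dp + adjoint dp ∘ₗ dp = dm ∘ₗ adjoint dm + adjoint dm ∘ₗ dm)
    (p q : ℤ) :
    ∀ Δ : V →ₗ[ℂ] V,
      Δ = (dp + dm) ∘ₗ adjoint (dp + dm) + adjoint (dp + dm) ∘ₗ (dp + dm) →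
      ∀ f : Fin 5 → Submodule ℂ V,
        f = ![(W (p - 1, q - 1)).map (dp ∘ₗ dm),
              (W (p + 1, q - 1)).map (adjoint dp ∘ₗ dm),
              (W (p - 1, q + 1)).map (dp ∘ₗ adjoint dm),
              (W (p + 1, q + 1)).map (adjoint dp ∘ₗ adjoint dm),
              ker Δ ⊓ W (p, q)] →
        (⨆ i : Fin 5, f i) = W (p, q) ∧
        ∀ i j : Fin 5, i ≠ j → ∀ x ∈ f i, ∀ y ∈ f j, (inner ℂ x y : ℂ) = 0 := by
  intro Δ hΔdef f hfdef
  haveI : CompleteSpace V := FiniteDimensional.complete ℂ V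
  -- component identification
  have hf0 : f 0 = (W (p - 1, q - 1)).map (dp ∘ₗ dm) := by rw [hfdef]; rfl
  have hf1 : f 1 = (W (p + 1, q - 1)).map (adjoint dp ∘ₗ dm) := by rw [hfdef]; rfl
  have hf2 : f 2 = (W (p - 1, q + 1)).map (dp ∘ₗ adjoint dm) := by rw [hfdef]; rfl
  have hf3 : f 3 = (W (p + 1, q + 1)).map (adjoint dp ∘ₗ adjoint dm) := by rw [hfdef]; rfl
  have hf4 : f 4 = ker Δ ⊓ W (p, q) := by rw [hfdef]; rfl
  -- pointwise algebraic identities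
  have hdp2' : ∀ v, dp (dp v) = 0 := fun v => by simpa using LinearMap.congr_fun hdp2 v
  have hdm2' : ∀ v, dm (dm v) = 0 := fun v => by simpa using LinearMap.congr_fun hdm2 v
  have hdpa2 : adjoint dp ∘ₗ adjoint dp = (0 : V →ₗ[ℂ] V) := by
    rw [← adjoint_comp, hdp2]; exact map_zero _
  have hdma2 : adjoint dm ∘ₗ adjoint dm = (0 : V →ₗ[ℂ] V) := by
    rw [← adjoint_comp, hdm2]; exact map_zero _
  have hdpa2' : ∀ v, adjoint dp (adjoint dp v) = 0 := fun v => by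
    simpa using LinearMap.congr_fun hdpa2 v
  have hdma2' : ∀ v, adjoint dm (adjoint dm v) = 0 := fun v => by
    simpa using LinearMap.congr_fun hdma2 v
  have acp : ∀ v, dp (dm v) = - dm (dp v) := fun v =>
    eq_neg_of_add_eq_zero_left (by simpa using LinearMap.congr_fun hanticomm v)
  have acp' : ∀ v, dm (dp v) = - dp (dm v) := fun v => by rw [acp v, neg_neg]
  have ack1 : ∀ v, dp (adjoint dm v) = - adjoint dm (dp v) := fun v =>
    eq_neg_of_add_eq_zero_left (by simpa using LinearMap.congr_fun hkahler1 v)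
  have ack1' : ∀ v, adjoint dm (dp v) = - dp (adjoint dm v) := fun v => by rw [ack1 v, neg_neg]
  have ack2 : ∀ v, dm (adjoint dp v) = - adjoint dp (dm v) := fun v =>
    eq_neg_of_add_eq_zero_left (by simpa using LinearMap.congr_fun hkahler2 v)
  have ack2' : ∀ v, adjoint dp (dm v) = - dm (adjoint dp v) := fun v => by rw [ack2 v, neg_neg]
  have hanticommA : adjoint dm ∘ₗ adjoint dp + adjoint dp ∘ₗ adjoint dm = (0 : V →ₗ[ℂ] V) := by
    have h := congrArg (fun g : V →ₗ[ℂ] V => LinearMap.adjoint g) hanticomm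
    simpa [map_add, adjoint_comp] using h
  have ack3 : ∀ v, adjoint dp (adjoint dm v) = - adjoint dm (adjoint dp v) := fun v =>
    eq_neg_of_add_eq_zero_right (by simpa using LinearMap.congr_fun hanticommA v)
  have ack3' : ∀ v, adjoint dm (adjoint dp v) = - adjoint dp (adjoint dm v) := fun v => by
    rw [ack3 v, neg_neg]
  have movL : ∀ (A : V →ₗ[ℂ] V) (u w : V), ⟪A u, w⟫ = ⟪u, adjoint A w⟫ :=
    fun A u w => (adjoint_inner_right A u w).symm
  -- Laplacian expansion
  have hΔ' : ∀ v, Δ v = dp (adjoint dp v) + adjoint dp (dp v)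
      + dm (adjoint dm v) + adjoint dm (dm v) := by
    intro v
    have hadj_add : LinearMap.adjoint (dp + dm) = adjoint dp + adjoint dm :=
      map_add LinearMap.adjoint dp dm
    rw [hΔdef]
    simp only [hadj_add, LinearMap.add_apply, LinearMap.comp_apply, map_add]
    rw [ack1 v, ack2 v]
    abel
  have hlap' : ∀ v, dp (adjoint dp v) + adjoint dp (dp v)
      = dm (adjoint dm v) + adjoint dm (dm v) := fun v => by
    simpa using LinearMap.congr_fun hlap v
  -- harmonic elements are closed
  have hker : ∀ v, Δ v = 0 → dp v = 0 ∧ adjoint dp v = 0 ∧ dm v = 0 ∧ adjoint dm v = 0 := by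
    intro v hv
    have h0 : ⟪v, Δ v⟫ = 0 := by rw [hv, inner_zero_right]
    rw [hΔ' v] at h0
    simp only [inner_add_right] at h0
    have e1 : ⟪v, dp (adjoint dp v)⟫ = ⟪adjoint dp v, adjoint dp v⟫ :=
      (adjoint_inner_left dp (adjoint dp v) v).symm
    have e2 : ⟪v, adjoint dp (dp v)⟫ = ⟪dp v, dp v⟫ := adjoint_inner_right dp v (dp v)
    have e3 : ⟪v, dm (adjoint dm v)⟫ = ⟪adjoint dm v, adjoint dm v⟫ :=
      (adjoint_inner_left dm (adjoint dm v) v).symm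
    have e4 : ⟪v, adjoint dm (dm v)⟫ = ⟪dm v, dm v⟫ := adjoint_inner_right dm v (dm v)
    rw [e1, e2, e3, e4] at h0
    simp only [inner_self_eq_norm_sq_to_K] at h0
    norm_cast at h0
    have h0r : ‖adjoint dp v‖ ^ 2 + ‖dp v‖ ^ 2 + ‖adjoint dm v‖ ^ 2 + ‖dm v‖ ^ 2 = 0 := by
      exact Complex.ofReal_eq_zero.mp h0
    have h1 : ‖adjoint dp v‖ ^ 2 = 0 := by
      linarith [sq_nonneg ‖adjoint dp v‖, sq_nonneg ‖dp v‖, sq_nonneg ‖dm v‖,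
        sq_nonneg ‖adjoint dm v‖]
    have h2 : ‖dp v‖ ^ 2 = 0 := by
      linarith [sq_nonneg ‖adjoint dp v‖, sq_nonneg ‖dp v‖, sq_nonneg ‖dm v‖,
        sq_nonneg ‖adjoint dm v‖]
    have h3 : ‖adjoint dm v‖ ^ 2 = 0 := by
      linarith [sq_nonneg ‖adjoint dp v‖, sq_nonneg ‖dp v‖, sq_nonneg ‖dm v‖,
        sq_nonneg ‖adjoint dm v‖]
    have h4 : ‖dm v‖ ^ 2 = 0 := by
      linarith [sq_nonneg ‖adjoint dp v‖, sq_nonneg ‖dp v‖, sq_nonneg ‖dm v‖,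
        sq_nonneg ‖adjoint dm v‖]
    refine ⟨?_, ?_, ?_, ?_⟩ <;>
      [skip; skip; skip; skip]
    · exact norm_eq_zero.mp (pow_eq_zero_iff (by norm_num) |>.mp h2)
    · exact norm_eq_zero.mp (pow_eq_zero_iff (by norm_num) |>.mp h1)
    · exact norm_eq_zero.mp (pow_eq_zero_iff (by norm_num) |>.mp h4)
    · exact norm_eq_zero.mp (pow_eq_zero_iff (by norm_num) |>.mp h3)
  -- degree congruence helper
  have hWc : ∀ (a b c d : ℤ), a = c → b = d → ∀ v, v ∈ W (a, b) → v ∈ W (c, d) := by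
    rintro a b c d rfl rfl v h; exact h
  -- adjoints shift degrees downwards
  have hdpa : ∀ (a b : ℤ), ∀ v ∈ W (a, b), adjoint dp v ∈ W (a - 1, b) := by
    intro a b v hv
    refine aux_mem_of_orth W hinternal horth _ _ ?_
    rintro ⟨c, d⟩ hj y hy
    have h0 : ⟪dp y, v⟫ = 0 := by
      refine horth (c + 1, d) (a, b) ?_ (dp y) (hdp c d y hy) v hv
      simp only [ne_eq, Prod.mk.injEq] at hj ⊢
      omega
    rw [← inner_conj_symm, adjoint_inner_right dp, h0, map_zero]
  have hdma : ∀ (a b : ℤ), ∀ v ∈ W (a, b), adjoint dm v ∈ W (a, b - 1) := by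
    intro a b v hv
    refine aux_mem_of_orth W hinternal horth _ _ ?_
    rintro ⟨c, d⟩ hj y hy
    have h0 : ⟪dm y, v⟫ = 0 := by
      refine horth (c, d + 1) (a, b) ?_ (dm y) (hdm c d y hy) v hv
      simp only [ne_eq, Prod.mk.injEq] at hj ⊢
      omega
    rw [← inner_conj_symm, adjoint_inner_right dm, h0, map_zero]
  -- the five pieces sit inside W (p, q)
  have hle0 : (W (p - 1, q - 1)).map (dp ∘ₗ dm) ≤ W (p, q) := by
    rintro x ⟨a, ha, rfl⟩
    simp only [LinearMap.comp_apply]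
    exact hWc _ _ _ _ (by ring) (by ring) _ (hdp (p - 1) (q - 1 + 1) _ (hdm (p - 1) (q - 1) a ha))
  have hle1 : (W (p + 1, q - 1)).map (adjoint dp ∘ₗ dm) ≤ W (p, q) := by
    rintro x ⟨a, ha, rfl⟩
    simp only [LinearMap.comp_apply]
    exact hWc _ _ _ _ (by ring) (by ring) _ (hdpa (p + 1) (q - 1 + 1) _ (hdm (p + 1) (q - 1) a ha))
  have hle2 : (W (p - 1, q + 1)).map (dp ∘ₗ adjoint dm) ≤ W (p, q) := by
    rintro x ⟨a, ha, rfl⟩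
    simp only [LinearMap.comp_apply]
    exact hWc _ _ _ _ (by ring) (by ring) _ (hdp (p - 1) (q + 1 - 1) _ (hdma (p - 1) (q + 1) a ha))
  have hle3 : (W (p + 1, q + 1)).map (adjoint dp ∘ₗ adjoint dm) ≤ W (p, q) := by
    rintro x ⟨a, ha, rfl⟩
    simp only [LinearMap.comp_apply]
    exact hWc _ _ _ _ (by ring) (by ring) _ (hdpa (p + 1) (q + 1 - 1) _ (hdma (p + 1) (q + 1) a ha))
  have hle : ∀ i : Fin 5, f i ≤ W (p, q) := by
    intro i
    fin_cases i
    · exact hf0 ▸ hle0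
    · exact hf1 ▸ hle1
    · exact hf2 ▸ hle2
    · exact hf3 ▸ hle3
    · exact hf4 ▸ inf_le_right
  -- pairwise orthogonality lemmas
  have P01 : ∀ x ∈ f 0, ∀ y ∈ f 1, ⟪x, y⟫ = 0 := by
    rw [hf0, hf1]
    rintro x ⟨a, _, rfl⟩ y ⟨b, _, rfl⟩
    simp only [LinearMap.comp_apply]
    rw [adjoint_inner_right dp, hdp2', inner_zero_left]
  have P02 : ∀ x ∈ f 0, ∀ y ∈ f 2, ⟪x, y⟫ = 0 := by
    rw [hf0, hf2]
    rintro x ⟨a, _, rfl⟩ y ⟨b, _, rfl⟩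
    simp only [LinearMap.comp_apply]
    rw [← adjoint_inner_left dp, adjoint_inner_right dm, ack2, acp', hdm2']
    simp
  have P03 : ∀ x ∈ f 0, ∀ y ∈ f 3, ⟪x, y⟫ = 0 := by
    rw [hf0, hf3]
    rintro x ⟨a, _, rfl⟩ y ⟨b, _, rfl⟩
    simp only [LinearMap.comp_apply]
    rw [adjoint_inner_right dp, hdp2', inner_zero_left]
  have P12 : ∀ x ∈ f 1, ∀ y ∈ f 2, ⟪x, y⟫ = 0 := by
    rw [hf1, hf2]
    rintro x ⟨a, _, rfl⟩ y ⟨b, _, rfl⟩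
    simp only [LinearMap.comp_apply]
    rw [adjoint_inner_left dp, hdp2', inner_zero_right]
  have P13 : ∀ x ∈ f 1, ∀ y ∈ f 3, ⟪x, y⟫ = 0 := by
    rw [hf1, hf3]
    rintro x ⟨a, _, rfl⟩ y ⟨b, _, rfl⟩
    simp only [LinearMap.comp_apply]
    rw [adjoint_inner_right dp, adjoint_inner_right dm, acp', ack2, hdm2']
    simp
  have P23 : ∀ x ∈ f 2, ∀ y ∈ f 3, ⟪x, y⟫ = 0 := by
    rw [hf2, hf3]
    rintro x ⟨a, _, rfl⟩ y ⟨b, _, rfl⟩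
    simp only [LinearMap.comp_apply]
    rw [adjoint_inner_right dp, hdp2', inner_zero_left]
  have P04 : ∀ x ∈ f 0, ∀ y ∈ f 4, ⟪x, y⟫ = 0 := by
    rw [hf0, hf4]
    rintro x ⟨a, _, rfl⟩ y hy
    obtain ⟨hyk, _⟩ := Submodule.mem_inf.mp hy
    obtain ⟨h1, h2, h3, h4⟩ := hker y (LinearMap.mem_ker.mp hyk)
    simp only [LinearMap.comp_apply]
    rw [movL, h2, inner_zero_right]
  have P14 : ∀ x ∈ f 1, ∀ y ∈ f 4, ⟪x, y⟫ = 0 := by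
    rw [hf1, hf4]
    rintro x ⟨a, _, rfl⟩ y hy
    obtain ⟨hyk, _⟩ := Submodule.mem_inf.mp hy
    obtain ⟨h1, h2, h3, h4⟩ := hker y (LinearMap.mem_ker.mp hyk)
    simp only [LinearMap.comp_apply]
    rw [adjoint_inner_left dp, h1, inner_zero_right]
  have P24 : ∀ x ∈ f 2, ∀ y ∈ f 4, ⟪x, y⟫ = 0 := by
    rw [hf2, hf4]
    rintro x ⟨a, _, rfl⟩ y hy
    obtain ⟨hyk, _⟩ := Submodule.mem_inf.mp hy
    obtain ⟨h1, h2, h3, h4⟩ := hker y (LinearMap.mem_ker.mp hyk)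
    simp only [LinearMap.comp_apply]
    rw [movL, h2, inner_zero_right]
  have P34 : ∀ x ∈ f 3, ∀ y ∈ f 4, ⟪x, y⟫ = 0 := by
    rw [hf3, hf4]
    rintro x ⟨a, _, rfl⟩ y hy
    obtain ⟨hyk, _⟩ := Submodule.mem_inf.mp hy
    obtain ⟨h1, h2, h3, h4⟩ := hker y (LinearMap.mem_ker.mp hyk)
    simp only [LinearMap.comp_apply]
    rw [adjoint_inner_left dp, h1, inner_zero_right]
  have flip : ∀ (A B : Submodule ℂ V), (∀ x ∈ A, ∀ y ∈ B, ⟪x, y⟫ = 0) →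
      ∀ x ∈ B, ∀ y ∈ A, ⟪x, y⟫ = 0 := by
    intro A B h x hx y hy
    rw [← inner_conj_symm, h y hy x hx, map_zero]
  constructor
  · -- supremum equals W (p, q)
    refine le_antisymm (iSup_le hle) ?_
    intro x hx
    set S : Submodule ℂ V := ⨆ i : Fin 5, f i with hS
    haveI : CompleteSpace S := FiniteDimensional.complete ℂ S
    have htot : S ⊔ Sᗮ = ⊤ := Submodule.sup_orthogonal_of_hasOrthogonalProjection
    obtain ⟨s, hs, t, ht, hst⟩ := Submodule.mem_sup.mp (htot ▸ Submodule.mem_top (x := x))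
    have hSW : S ≤ W (p, q) := iSup_le hle
    have htW : t ∈ W (p, q) := by
      have h1 : t = x - s := by rw [← hst]; abel
      rw [h1]
      exact Submodule.sub_mem _ hx (hSW hs)
    have htορ : ∀ u ∈ S, ⟪u, t⟫ = 0 := (Submodule.mem_orthogonal S t).mp ht
    -- the four second-order operators kill t
    have k1 : adjoint dm (adjoint dp t) = 0 := by
      have hmem : adjoint dm (adjoint dp t) ∈ W (p - 1, q - 1) :=
        hdma (p - 1) q _ (hdpa p q t htW)
      have hz : ⟪adjoint dm (adjoint dp t), adjoint dm (adjoint dp t)⟫ = 0 := by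
        rw [adjoint_inner_right dm, adjoint_inner_right dp]
        refine htορ _ (le_iSup f 0 ?_)
        rw [hf0]
        exact ⟨_, hmem, rfl⟩
      exact inner_self_eq_zero.mp hz
    have k2 : adjoint dm (dp t) = 0 := by
      have hmem : adjoint dm (dp t) ∈ W (p + 1, q - 1) :=
        hdma (p + 1) q _ (hdp p q t htW)
      have hz : ⟪adjoint dm (dp t), adjoint dm (dp t)⟫ = 0 := by
        rw [adjoint_inner_right dm, ← adjoint_inner_left dp]
        refine htορ _ (le_iSup f 1 ?_)
        rw [hf1]
        exact ⟨_, hmem, rfl⟩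
      exact inner_self_eq_zero.mp hz
    have k3 : dm (adjoint dp t) = 0 := by
      have hmem : dm (adjoint dp t) ∈ W (p - 1, q + 1) :=
        hdm (p - 1) q _ (hdpa p q t htW)
      have hz : ⟪dm (adjoint dp t), dm (adjoint dp t)⟫ = 0 := by
        rw [← adjoint_inner_left dm, adjoint_inner_right dp]
        refine htορ _ (le_iSup f 2 ?_)
        rw [hf2]
        exact ⟨_, hmem, rfl⟩
      exact inner_self_eq_zero.mp hz
    have k4 : dm (dp t) = 0 := by
      have hmem : dm (dp t) ∈ W (p + 1, q + 1) :=
        hdm (p + 1) q _ (hdp p q t htW)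
      have hz : ⟪dm (dp t), dm (dp t)⟫ = 0 := by
        rw [← adjoint_inner_left dm, ← adjoint_inner_left dp]
        refine htορ _ (le_iSup f 3 ?_)
        rw [hf3]
        exact ⟨_, hmem, rfl⟩
      exact inner_self_eq_zero.mp hz
    -- hence t is harmonic
    have hmix : ⟪dp (adjoint dp t) + adjoint dp (dp t),
        dm (adjoint dm t) + adjoint dm (dm t)⟫ = 0 := by
      rw [inner_add_left, inner_add_right, inner_add_right]
      have T1 : ⟪dp (adjoint dp t), dm (adjoint dm t)⟫ = 0 := by
        rw [← adjoint_inner_left dm, ack1', k1]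
        simp
      have T2 : ⟪dp (adjoint dp t), adjoint dm (dm t)⟫ = 0 := by
        rw [adjoint_inner_right dm, acp', k3]
        simp
      have T3 : ⟪adjoint dp (dp t), dm (adjoint dm t)⟫ = 0 := by
        rw [← adjoint_inner_left dm, ack3', k2]
        simp
      have T4 : ⟪adjoint dp (dp t), adjoint dm (dm t)⟫ = 0 := by
        rw [adjoint_inner_right dm, ack2, k4]
        simp
      rw [T1, T2, T3, T4]
      ring
    have hplus : dp (adjoint dp t) + adjoint dp (dp t) = 0 := by
      have hz : ⟪dp (adjoint dp t) + adjoint dp (dp t),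
          dp (adjoint dp t) + adjoint dp (dp t)⟫ = 0 := by
        nth_rewrite 2 [hlap' t]
        exact hmix
      exact inner_self_eq_zero.mp hz
    have hΔt : Δ t = 0 := by
      rw [hΔ' t]
      have h5 : dm (adjoint dm t) + adjoint dm (dm t) = 0 := by rw [← hlap' t]; exact hplus
      have h6 : dp (adjoint dp t) + adjoint dp (dp t)
          + dm (adjoint dm t) + adjoint dm (dm t)
          = (dp (adjoint dp t) + adjoint dp (dp t))
            + (dm (adjoint dm t) + adjoint dm (dm t)) := by abel
      rw [h6, hplus, h5, add_zero]
    have htS : t ∈ S := by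
      refine le_iSup f 4 ?_
      rw [hf4]
      exact Submodule.mem_inf.mpr ⟨LinearMap.mem_ker.mpr hΔt, htW⟩
    have ht0 : t = 0 := inner_self_eq_zero.mp (htορ t htS)
    rw [← hst, ht0, add_zero]
    exact hs
  · -- pairwise orthogonality
    intro i j hij x hx y hy
    fin_cases i <;> fin_cases j
    · exact absurd rfl hij
    · exact P01 x hx y hy
    · exact P02 x hx y hy
    · exact P03 x hx y hy
    · exact P04 x hx y hy
    · exact flip _ _ P01 x hx y hy
    · exact absurd rfl hij
    · exact P12 x hx y hy
    · exact P13 x hx y hy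
    · exact P14 x hx y hy
    · exact flip _ _ P02 x hx y hy
    · exact flip _ _ P12 x hx y hy
    · exact absurd rfl hij
    · exact P23 x hx y hy
    · exact P24 x hx y hy
    · exact flip _ _ P03 x hx y hy
    · exact flip _ _ P13 x hx y hy
    · exact flip _ _ P23 x hx y hy
    · exact absurd rfl hij
    · exact P34 x hx y hy
    · exact flip _ _ P04 x hx y hy
    · exact flip _ _ P14 x hx y hy
    · exact flip _ _ P24 x hx y hy
    · exact flip _ _ P34 x hx y hy
    · exact absurd rfl hij
end

section
/- (∂∂̄-lemma.) In the bigraded setting, assume in addition that the Kähler identities d₊d₋† + d₋†d₊ = 0 and d₋d₊† + d₊†d₋ = 0 hold and that Δ₊ = Δ₋. Let α ∈ V^{p,q} satisfy Dα = 0, where D = d₊ + d₋. Then the following are equivalent: (a) α is D-exact, i.e. α ∈ D(V); (b) α is d₊-exact; (c) α is d₋-exact; (d) α is d₊d₋-exact; (e) α is orthogonal to ker Δ ∩ V^{p,q}. -/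
open LinearMap

private lemma aux_orth_ker_eq_range {E : Type*} [NormedAddCommGroup E]
    [InnerProductSpace ℂ E] [FiniteDimensional ℂ E] (T : E →ₗ[ℂ] E)
    (hT : T.IsSymmetric) : (LinearMap.ker T)ᗮ = LinearMap.range T := by
  have hle : LinearMap.range T ≤ (LinearMap.ker T)ᗮ := by
    rintro _ ⟨x, rfl⟩
    rw [Submodule.mem_orthogonal]
    intro u hu
    rw [← hT u x, LinearMap.mem_ker.mp hu, inner_zero_left]
  refine (Submodule.eq_of_le_of_finrank_le hle ?_).symm
  have h1 := Submodule.finrank_add_finrank_orthogonal (K := LinearMap.ker T) (E := E) (𝕜 := ℂ)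
  have h2 := LinearMap.finrank_range_add_finrank_ker T
  omega

private lemma aux_symm {E : Type*} [NormedAddCommGroup E]
    [InnerProductSpace ℂ E] [FiniteDimensional ℂ E] (T : E →ₗ[ℂ] E) :
    (T ∘ₗ LinearMap.adjoint T + LinearMap.adjoint T ∘ₗ T).IsSymmetric := by
  intro x y
  simp only [LinearMap.add_apply, LinearMap.comp_apply, inner_add_left, inner_add_right]
  rw [← LinearMap.adjoint_inner_right T (LinearMap.adjoint T x) y,
    LinearMap.adjoint_inner_left T y (T x),
    ← LinearMap.adjoint_inner_left T (LinearMap.adjoint T y) x,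
    LinearMap.adjoint_inner_right T x (T y)]

private lemma aux_exists_decomp {E : Type*} [NormedAddCommGroup E]
    [InnerProductSpace ℂ E] [FiniteDimensional ℂ E] (T : E →ₗ[ℂ] E)
    (hT : T.IsSymmetric) (x : E) : ∃ h, T h = 0 ∧ ∃ δ, x = h + T δ := by
  haveI := FiniteDimensional.complete ℂ E
  obtain ⟨y, hy, z, hz, hxyz⟩ :=
    Submodule.exists_add_mem_mem_orthogonal (K := LinearMap.ker T) x
  rw [aux_orth_ker_eq_range T hT] at hz
  obtain ⟨δ, rfl⟩ := hz
  exact ⟨y, LinearMap.mem_ker.mp hy, δ, hxyz.symm ▸ rfl⟩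

set_option maxHeartbeats 2000000 in
/-- The ∂∂̄-lemma for the bigraded setting with Kähler identities and `Δ₊ = Δ₋`: for a
`D`-closed `α ∈ V^{p,q}`, being `D`-exact, `d₊`-exact, `d₋`-exact, `d₊d₋`-exact, and being
orthogonal to the harmonic part of `V^{p,q}` are all equivalent. -/
theorem del_delbar_lemma
    (V : Type*) [NormedAddCommGroup V] [InnerProductSpace ℂ V] [FiniteDimensional ℂ V]
    (W : ℤ × ℤ → Submodule ℂ V)
    (hinternal : DirectSum.IsInternal W)
    (horth : ∀ i j : ℤ × ℤ, i ≠ j → ∀ x ∈ W i, ∀ y ∈ W j, (inner ℂ x y : ℂ) = 0)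
    (dp dm : V →ₗ[ℂ] V)
    (hdp : ∀ p q : ℤ, ∀ x ∈ W (p, q), dp x ∈ W (p + 1, q))
    (hdm : ∀ p q : ℤ, ∀ x ∈ W (p, q), dm x ∈ W (p, q + 1))
    (hdp2 : dp ∘ₗ dp = 0) (hdm2 : dm ∘ₗ dm = 0)
    (hanticomm : dp ∘ₗ dm + dm ∘ₗ dp = 0)
    (hkahler1 : dp ∘ₗ adjoint dm + adjoint dm ∘ₗ dp = 0)
    (hkahler2 : dm ∘ₗ adjoint dp + adjoint dp ∘ₗ dm = 0)
    (hlap : dp ∘ₗ adjoint dp + adjoint dp ∘ₗ dp = dm ∘ₗ adjoint dm + adjoint dm ∘ₗ dm)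
    (p q : ℤ) (α : V) (hα : α ∈ W (p, q)) (hclosed : (dp + dm) α = 0) :
    ∀ Δ : V →ₗ[ℂ] V,
      Δ = (dp + dm) ∘ₗ adjoint (dp + dm) + adjoint (dp + dm) ∘ₗ (dp + dm) →
      List.TFAE
        [α ∈ LinearMap.range (dp + dm),
         α ∈ LinearMap.range dp,
         α ∈ LinearMap.range dm,
         α ∈ LinearMap.range (dp ∘ₗ dm),
         ∀ h ∈ ker Δ ⊓ W (p, q), (inner ℂ α h : ℂ) = 0] := by
  classical
  intro Δ hΔ
  -- pointwise forms of the structural identities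
  have hdp2' : ∀ x, dp (dp x) = 0 := fun x => by
    have := congrFun (congrArg DFunLike.coe hdp2) x
    simpa using this
  have hdm2' : ∀ x, dm (dm x) = 0 := fun x => by
    have := congrFun (congrArg DFunLike.coe hdm2) x
    simpa using this
  have hanti' : ∀ x, dm (dp x) = -(dp (dm x)) := fun x => by
    have := congrFun (congrArg DFunLike.coe hanticomm) x
    simp only [LinearMap.add_apply, LinearMap.comp_apply, LinearMap.zero_apply] at this
    exact eq_neg_of_add_eq_zero_right this
  have hk1' : ∀ x, dp (adjoint dm x) = -(adjoint dm (dp x)) := fun x => by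
    have := congrFun (congrArg DFunLike.coe hkahler1) x
    simp only [LinearMap.add_apply, LinearMap.comp_apply, LinearMap.zero_apply] at this
    exact eq_neg_of_add_eq_zero_left this
  -- membership in a graded piece from orthogonality to all other pieces
  have hmem : ∀ (x : V) (j : ℤ × ℤ),
      (∀ k, k ≠ j → ∀ y ∈ W k, (inner ℂ x y : ℂ) = 0) → x ∈ W j := by
    intro x j hx
    have hx' : x ∈ ⨆ i, W i := by
      rw [hinternal.submodule_iSup_eq_top]; trivial
    rw [Submodule.mem_iSup_iff_exists_dfinsupp'] at hx'
    obtain ⟨f, hf⟩ := hx'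
    have hzero : ∀ k, k ≠ j → ((f k : V)) = 0 := by
      intro k hk
      have h1 : (inner ℂ x ((f k : V)) : ℂ) = inner ℂ ((f k : V)) ((f k : V)) := by
        rw [← hf, DFinsupp.sum, sum_inner]
        refine Finset.sum_eq_single k
          (fun b _ hb => horth b k hb _ (f b).2 _ (f k).2) (fun hk' => ?_)
        rw [DFinsupp.notMem_support_iff.mp hk']
        simp
      rw [hx k hk _ (f k).2] at h1
      exact inner_self_eq_zero.mp h1.symm
    have hxj : x = (f j : V) := by
      rw [← hf, DFinsupp.sum]
      refine Finset.sum_eq_single j (fun b _ hb => hzero b hb) (fun hj => ?_)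
      rw [DFinsupp.notMem_support_iff.mp hj]
      simp
    exact hxj ▸ (f j).2
  -- the adjoints shift degree the other way
  have hPW : ∀ (a b : ℤ), ∀ x ∈ W (a, b), adjoint dp x ∈ W (a - 1, b) := by
    intro a b x hx
    refine hmem _ _ ?_
    rintro ⟨k1, k2⟩ hk y hy
    rw [adjoint_inner_left]
    refine horth (a, b) (k1 + 1, k2) (fun hcon => hk ?_) _ hx _ (hdp k1 k2 y hy)
    simp only [Prod.mk.injEq] at hcon ⊢
    omega
  have hMW : ∀ (a b : ℤ), ∀ x ∈ W (a, b), adjoint dm x ∈ W (a, b - 1) := by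
    intro a b x hx
    refine hmem _ _ ?_
    rintro ⟨k1, k2⟩ hk y hy
    rw [adjoint_inner_left]
    refine horth (a, b) (k1, k2 + 1) (fun hcon => hk ?_) _ hx _ (hdm k1 k2 y hy)
    simp only [Prod.mk.injEq] at hcon ⊢
    omega
  -- the Laplacian splits, and equals twice each partial Laplacian
  have hadj : adjoint (dp + dm) = adjoint dp + adjoint dm := map_add LinearMap.adjoint dp dm
  have hck1 : dp ∘ₗ adjoint dm = -(adjoint dm ∘ₗ dp) := eq_neg_of_add_eq_zero_left hkahler1
  have hck2 : dm ∘ₗ adjoint dp = -(adjoint dp ∘ₗ dm) := eq_neg_of_add_eq_zero_left hkahler2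
  have hΔsplit : Δ = (dp ∘ₗ adjoint dp + adjoint dp ∘ₗ dp)
      + (dm ∘ₗ adjoint dm + adjoint dm ∘ₗ dm) := by
    rw [hΔ, hadj]
    simp only [LinearMap.add_comp, LinearMap.comp_add, hck1, hck2]
    abel
  have hΔ2p : Δ = (2 : ℂ) • (dp ∘ₗ adjoint dp + adjoint dp ∘ₗ dp) := by
    rw [hΔsplit, ← hlap, two_smul]
  have hΔ2m : Δ = (2 : ℂ) • (dm ∘ₗ adjoint dm + adjoint dm ∘ₗ dm) := by
    rw [hΔsplit, hlap, two_smul]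
  -- from `d (d† x) + d† (d x) = 0` conclude both vanish
  have pair : ∀ (d : V →ₗ[ℂ] V) (x : V),
      d (adjoint d x) + adjoint d (d x) = 0 → d x = 0 ∧ adjoint d x = 0 := by
    intro d x hx
    have i1 : (inner ℂ (d (adjoint d x)) x : ℂ) + inner ℂ (adjoint d (d x)) x = 0 := by
      rw [← inner_add_left, hx, inner_zero_left]
    have ia : (inner ℂ (adjoint d (d x)) x : ℂ) = inner ℂ (d x) (d x) :=
      adjoint_inner_left d x (d x)
    have ib : (inner ℂ (d (adjoint d x)) x : ℂ) = inner ℂ (adjoint d x) (adjoint d x) := by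
      rw [← adjoint_inner_right d (adjoint d x) x]
    rw [ia, ib, inner_self_eq_norm_sq_to_K, inner_self_eq_norm_sq_to_K] at i1
    have i2' : ((‖adjoint d x‖ ^ 2 + ‖d x‖ ^ 2 : ℝ) : ℂ) = 0 := by push_cast; exact i1
    have i2 : ‖adjoint d x‖ ^ 2 + ‖d x‖ ^ 2 = 0 := by exact_mod_cast i2'
    constructor
    · have : ‖d x‖ = 0 := by nlinarith [norm_nonneg (d x), norm_nonneg (adjoint d x)]
      exact norm_eq_zero.mp this
    · have : ‖adjoint d x‖ = 0 := by
        nlinarith [norm_nonneg (d x), norm_nonneg (adjoint d x)]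
      exact norm_eq_zero.mp this
  -- harmonic elements are killed by all four operators
  have hker : ∀ x : V, Δ x = 0 →
      dp x = 0 ∧ adjoint dp x = 0 ∧ dm x = 0 ∧ adjoint dm x = 0 := by
    intro x hx
    have hp : dp (adjoint dp x) + adjoint dp (dp x) = 0 := by
      have h0 : ((2 : ℂ) • (dp ∘ₗ adjoint dp + adjoint dp ∘ₗ dp)) x = 0 := by
        rw [← hΔ2p]; exact hx
      rw [LinearMap.smul_apply, smul_eq_zero] at h0
      simpa [LinearMap.add_apply, LinearMap.comp_apply] using h0.resolve_left two_ne_zero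
    have hm : dm (adjoint dm x) + adjoint dm (dm x) = 0 := by
      have h0 : ((2 : ℂ) • (dm ∘ₗ adjoint dm + adjoint dm ∘ₗ dm)) x = 0 := by
        rw [← hΔ2m]; exact hx
      rw [LinearMap.smul_apply, smul_eq_zero] at h0
      simpa [LinearMap.add_apply, LinearMap.comp_apply] using h0.resolve_left two_ne_zero
    obtain ⟨hp1, hp2⟩ := pair dp x hp
    obtain ⟨hm1, hm2⟩ := pair dm x hm
    exact ⟨hp1, hp2, hm1, hm2⟩
  -- `α` is separately closed
  have hDα : dp α + dm α = 0 := by simpa [LinearMap.add_apply] using hclosed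
  have hdpα : dp α = 0 := by
    have h0 : (inner ℂ (dp α) (dp α) : ℂ) = 0 := by
      have hneg : dp α = -(dm α) := eq_neg_of_add_eq_zero_left hDα
      nth_rewrite 2 [hneg]
      rw [inner_neg_right, horth (p + 1, q) (p, q + 1) ?_ _ (hdp p q α hα) _ (hdm p q α hα),
        neg_zero]
      simp only [ne_eq, Prod.mk.injEq]
      omega
    exact inner_self_eq_zero.mp h0
  have hdmα : dm α = 0 := by rwa [hdpα, zero_add] at hDα
  -- `Δ` is symmetric
  have hΔsym : Δ.IsSymmetric := hΔ ▸ aux_symm (dp + dm)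
  -- `Δ` preserves the graded piece `W (p, q)`
  have hΔW : ∀ x ∈ W (p, q), Δ x ∈ W (p, q) := by
    intro x hx
    rw [hΔ2p]
    simp only [LinearMap.smul_apply, LinearMap.add_apply, LinearMap.comp_apply]
    refine Submodule.smul_mem _ _ (Submodule.add_mem _ ?_ ?_)
    · have h2 := hdp (p - 1) q _ (hPW p q x hx)
      have : (p - 1 + 1 : ℤ) = p := by ring
      rwa [this] at h2
    · have h2 := hPW (p + 1) q _ (hdp p q x hx)
      have : (p + 1 - 1 : ℤ) = p := by ring
      rwa [this] at h2
  tfae_have 1 → 5 := by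
    rintro ⟨β, hβ⟩ h hh
    obtain ⟨hhk, -⟩ := Submodule.mem_inf.mp hh
    obtain ⟨-, hq2, -, hq4⟩ := hker h (LinearMap.mem_ker.mp hhk)
    rw [← hβ, ← adjoint_inner_right (dp + dm) β h, hadj, LinearMap.add_apply, hq2, hq4,
      add_zero, inner_zero_right]
  tfae_have 2 → 5 := by
    rintro ⟨β, hβ⟩ h hh
    obtain ⟨hhk, -⟩ := Submodule.mem_inf.mp hh
    obtain ⟨-, hq2, -, -⟩ := hker h (LinearMap.mem_ker.mp hhk)
    rw [← hβ, ← adjoint_inner_right dp β h, hq2, inner_zero_right]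
  tfae_have 3 → 5 := by
    rintro ⟨β, hβ⟩ h hh
    obtain ⟨hhk, -⟩ := Submodule.mem_inf.mp hh
    obtain ⟨-, -, -, hq4⟩ := hker h (LinearMap.mem_ker.mp hhk)
    rw [← hβ, ← adjoint_inner_right dm β h, hq4, inner_zero_right]
  tfae_have 4 → 1 := by
    rintro ⟨σ, hσ⟩
    refine ⟨dm σ, ?_⟩
    rw [LinearMap.add_apply, hdm2' σ, add_zero, ← LinearMap.comp_apply, hσ]
  tfae_have 4 → 2 := by
    rintro ⟨σ, hσ⟩
    exact ⟨dm σ, by rw [← LinearMap.comp_apply, hσ]⟩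
  tfae_have 4 → 3 := by
    rintro ⟨σ, hσ⟩
    refine ⟨-(dp σ), ?_⟩
    rw [map_neg, hanti' σ, neg_neg, ← LinearMap.comp_apply, hσ]
  tfae_have 5 → 4 := by
    intro h5
    -- `α` is in the range of `Δ` restricted to `W (p, q)`
    set S : W (p, q) →ₗ[ℂ] W (p, q) := Δ.restrict hΔW with hS
    have hSsym : S.IsSymmetric := by
      intro x y
      have h0 : (inner ℂ (Δ (x : V)) ((y : V)) : ℂ) = inner ℂ ((x : V)) (Δ (y : V)) := hΔsym x y
      simpa [hS, Submodule.coe_inner, LinearMap.restrict_coe_apply] using h0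
    have hα' : (⟨α, hα⟩ : W (p, q)) ∈ LinearMap.range S := by
      rw [← aux_orth_ker_eq_range S hSsym, Submodule.mem_orthogonal']
      intro u hu
      have hu0 : Δ (u : V) = 0 := by
        have := congrArg (Subtype.val) (LinearMap.mem_ker.mp hu)
        simpa [hS, LinearMap.restrict_coe_apply] using this
      exact h5 (u : V) (Submodule.mem_inf.mpr ⟨LinearMap.mem_ker.mpr hu0, u.2⟩)
    obtain ⟨β', hβ'⟩ := hα'
    have hβ : Δ (β' : V) = α := by
      have := congrArg (Subtype.val) hβ'
      simpa [hS, LinearMap.restrict_coe_apply] using this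
    set β := (β' : V) with hβdef
    -- `α = dp γ` with `γ = 2 d₊† β`
    have hαform : α = (2 : ℂ) • (dp (adjoint dp β) + adjoint dp (dp β)) := by
      rw [← hβ, hΔ2p]
      simp [LinearMap.smul_apply, LinearMap.add_apply, LinearMap.comp_apply]
    have hPdpβ : adjoint dp (dp β) = 0 := by
      have h1 : dp (adjoint dp (dp β)) = 0 := by
        have e0 : (0 : V) = (2 : ℂ) • dp (adjoint dp (dp β)) := by
          rw [← hdpα, hαform, map_smul, map_add, hdp2', zero_add]
        rcases smul_eq_zero.mp e0.symm with h | h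
        · exact absurd h two_ne_zero
        · exact h
      have h0 : (inner ℂ (adjoint dp (dp β)) (adjoint dp (dp β)) : ℂ) = 0 := by
        rw [adjoint_inner_left, h1, inner_zero_right]
      exact inner_self_eq_zero.mp h0
    have hαdp : α = dp ((2 : ℂ) • adjoint dp β) := by
      rw [map_smul, hαform, hPdpβ, add_zero]
    -- decompose `2 d₊† β` into harmonic plus `Δ`-exact
    obtain ⟨h, hh0, δ, hγ⟩ := aux_exists_decomp Δ hΔsym ((2 : ℂ) • adjoint dp β)
    have hdph : dp h = 0 := (hker h hh0).1
    have hαexp : α = (2 : ℂ) • (dp (dm (adjoint dm δ)) + dp (adjoint dm (dm δ))) := by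
      calc α = dp ((2 : ℂ) • adjoint dp β) := hαdp
        _ = dp h + dp (Δ δ) := by rw [hγ, map_add]
        _ = dp (Δ δ) := by rw [hdph, zero_add]
        _ = (2 : ℂ) • (dp (dm (adjoint dm δ)) + dp (adjoint dm (dm δ))) := by
            rw [hΔ2m]
            simp [LinearMap.smul_apply, LinearMap.add_apply, LinearMap.comp_apply]
    set u := dp (adjoint dm (dm δ)) with hu_def
    have hdmu : dm u = 0 := by
      have e1 : dm (dp (dm (adjoint dm δ))) = 0 := by
        rw [hanti' (dm (adjoint dm δ)), hdm2', map_zero, neg_zero]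
      have e2 : (0 : V) = (2 : ℂ) • dm u := by
        rw [← hdmα, hαexp, map_smul, map_add, e1, zero_add]
      rcases smul_eq_zero.mp e2.symm with h' | h'
      · exact absurd h' two_ne_zero
      · exact h'
    have hu : u = 0 := by
      have h0 : (inner ℂ u u : ℂ) = 0 := by
        nth_rewrite 1 [hu_def, hk1' (dm δ)]
        rw [inner_neg_left, adjoint_inner_left, hdmu, inner_zero_right, neg_zero]
      exact inner_self_eq_zero.mp h0
    refine ⟨(2 : ℂ) • adjoint dm δ, ?_⟩
    rw [LinearMap.comp_apply, map_smul, map_smul, hαexp, hu, add_zero]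
  tfae_finish
end

section
/- In an algebraic Courant algebroid over a commutative ring R whose underlying module E is faithful, the anchor is a bracket homomorphism: for all u, v ∈ E and all f ∈ R, ρ([u,v])(f) = ρ(u)(ρ(v)(f)) − ρ(v)(ρ(u)(f)). -/
/-- An algebraic Courant algebroid over a commutative ring `R`: an `R`-module `E` with a
bracket, a symmetric `R`-bilinear pairing, an anchor valued in derivations of `R`, and a map
`𝒟 : R → E`, satisfying the Courant algebroid axioms. -/
structure AlgebraicCourantAlgebroid (R : Type*) [CommRing R]
    (E : Type*) [AddCommGroup E] [Module R E] where
  /-- the Dorfman bracket -/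
  bracket : E → E → E
  bracket_add_left : ∀ u v w : E, bracket (u + v) w = bracket u w + bracket v w
  bracket_add_right : ∀ u v w : E, bracket u (v + w) = bracket u v + bracket u w
  /-- the symmetric `R`-bilinear pairing -/
  pair : E →ₗ[R] E →ₗ[R] R
  pair_comm : ∀ u v : E, pair u v = pair v u
  /-- the anchor map, assigning to each `u : E` a derivation of `R` -/
  rho : E → R → R
  rho_add_left : ∀ u v : E, ∀ f : R, rho (u + v) f = rho u f + rho v f
  rho_add_right : ∀ u : E, ∀ f g : R, rho u (f + g) = rho u f + rho u g
  rho_leibniz : ∀ u : E, ∀ f g : R, rho u (f * g) = f * rho u g + g * rho u f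
  /-- the map `𝒟 : R → E`, adjoint of the anchor -/
  Dop : R → E
  pair_Dop : ∀ f : R, ∀ w : E, pair (Dop f) w = rho w f
  jacobi : ∀ u v w : E,
    bracket u (bracket v w) = bracket (bracket u v) w + bracket v (bracket u w)
  bracket_smul : ∀ u : E, ∀ f : R, ∀ v : E,
    bracket u (f • v) = f • bracket u v + rho u f • v
  rho_pair : ∀ u v w : E,
    rho u (pair v w) = pair (bracket u v) w + pair v (bracket u w)
  bracket_symm : ∀ u v : E, bracket u v + bracket v u = Dop (pair u v)

/-- In an algebraic Courant algebroid whose underlying module is faithful, the anchor is a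
bracket homomorphism: `ρ([u,v]) = ρ(u)∘ρ(v) − ρ(v)∘ρ(u)`. -/
theorem anchor_bracket_hom {R : Type*} [CommRing R] {E : Type*} [AddCommGroup E] [Module R E]
    (C : AlgebraicCourantAlgebroid R E)
    (hfaithful : ∀ f : R, (∀ x : E, f • x = 0) → f = 0) :
    ∀ u v : E, ∀ f : R,
      C.rho (C.bracket u v) f = C.rho u (C.rho v f) - C.rho v (C.rho u f) := by
  intro u v f
  have key : ∀ w : E,
      (C.rho (C.bracket u v) f - (C.rho u (C.rho v f) - C.rho v (C.rho u f))) • w = 0 := by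
    intro w
    have h1 := C.jacobi u v (f • w)
    simp only [C.bracket_smul, C.bracket_add_right, C.bracket_smul, smul_add] at h1
    rw [C.jacobi u v w] at h1
    linear_combination (norm := module) -h1
  have := hfaithful _ key
  exact sub_eq_zero.mp this
end

section
/- In an algebraic Courant algebroid over a commutative ring R whose underlying module E is faithful and whose pairing is unital (i.e. there exist u₀, v₀ ∈ E with ⟨u₀, v₀⟩ = 1), one has ρ(𝒟f) = 0 for every f ∈ R; that is, the composition ρ ∘ 𝒟 vanishes (the algebroid analogue of ρ ∘ ρ* = 0). -/
theorem rho_bracket_comm' {R : Type*} [CommRing R] {E : Type*} [AddCommGroup E]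
    [Module R E] (C : AlgebraicCourantAlgebroid R E)
    (hfaithful : ∀ f : R, (∀ x : E, f • x = 0) → f = 0)
    (u v : E) (g : R) :
    C.rho (C.bracket u v) g = C.rho u (C.rho v g) - C.rho v (C.rho u g) := by
  have key : ∀ x : E,
      (C.rho u (C.rho v g) - C.rho v (C.rho u g) - C.rho (C.bracket u v) g) • x = 0 := by
    intro x
    have h := C.jacobi u v (g • x)
    have hj := C.jacobi u v x
    simp only [C.bracket_smul, C.bracket_add_right] at h
    linear_combination (norm := module) h - g • hj
  have h0 := hfaithful _ key
  linear_combination -h0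

/-- In an algebraic Courant algebroid with faithful underlying module and unital pairing,
`ρ ∘ 𝒟 = 0`. -/
theorem anchor_comp_Dop_eq_zero {R : Type*} [CommRing R] {E : Type*} [AddCommGroup E]
    [Module R E] (C : AlgebraicCourantAlgebroid R E)
    (hfaithful : ∀ f : R, (∀ x : E, f • x = 0) → f = 0)
    (hunital : ∃ u₀ v₀ : E, C.pair u₀ v₀ = 1) :
    ∀ f g : R, C.rho (C.Dop f) g = 0 := by
  intro f g
  obtain ⟨u₀, v₀, huv⟩ := hunital
  have hf : C.pair (f • u₀) v₀ = f := by
    rw [map_smul, LinearMap.smul_apply, huv, smul_eq_mul, mul_one]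
  have hD : C.Dop f = C.bracket (f • u₀) v₀ + C.bracket v₀ (f • u₀) := by
    rw [C.bracket_symm, hf]
  rw [hD, C.rho_add_left,
    rho_bracket_comm' C hfaithful, rho_bracket_comm' C hfaithful]
  ring
end

section
/- Let D be a Courant algebroid connection on an algebraic Courant algebroid. Then its torsion T(u,v,w) := ⟨D_u v − D_v u − [u,v], w⟩ + ⟨D_w u, v⟩ is totally antisymmetric in (u,v,w) (it changes sign under swapping any two arguments) and is R-linear in each argument: T(f·u, v, w) = T(u, f·v, w) = T(u, v, f·w) = f·T(u,v,w) for all f ∈ R. -/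
/-- The torsion `T(u,v,w) = ⟨D_u v − D_v u − [u,v], w⟩ + ⟨D_w u, v⟩` of a Courant algebroid
connection is totally antisymmetric and `R`-linear in each argument (a tensor in `Λ³E`). -/
theorem torsion_antisymm_and_tensorial {R : Type*} [CommRing R] {E : Type*} [AddCommGroup E]
    [Module R E] (C : AlgebraicCourantAlgebroid R E)
    (D : E → E → E)
    (hD_add_left : ∀ u v w : E, D (u + v) w = D u w + D v w)
    (hD_add_right : ∀ u v w : E, D u (v + w) = D u v + D u w)
    (hD_smul_left : ∀ (f : R) (u v : E), D (f • u) v = f • D u v)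
    (hD_smul_right : ∀ (u : E) (f : R) (v : E), D u (f • v) = f • D u v + C.rho u f • v)
    (hD_metric : ∀ u v w : E,
      C.rho u (C.pair v w) = C.pair (D u v) w + C.pair v (D u w)) :
    ∀ T : E → E → E → R,
      (∀ u v w : E,
        T u v w = C.pair (D u v - D v u - C.bracket u v) w + C.pair (D w u) v) →
      ∀ (u v w : E) (f : R),
        T u v w = - T v u w ∧
        T u v w = - T u w v ∧
        T (f • u) v w = f * T u v w ∧
        T u (f • v) w = f * T u v w ∧
        T u v (f • w) = f * T u v w := by
  intro T hT u v w f
  have key12 : ∀ a b c : E, T a b c = - T b a c := by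
    intro a b c
    have hb := congrArg (fun x => C.pair x c) (C.bracket_symm a b)
    simp only [map_add, LinearMap.add_apply] at hb
    have hd := C.pair_Dop (C.pair a b) c
    have hm := hD_metric c a b
    have hc : C.pair b (D c a) = C.pair (D c a) b := C.pair_comm _ _
    simp only [hT, map_sub, LinearMap.sub_apply]
    rw [C.pair_comm a (D c b)] at hm
    linear_combination - hb - hd - hm
  have key23 : ∀ a b c : E, T a b c = - T a c b := by
    intro a b c
    have hm := hD_metric a b c
    have hr := C.rho_pair a b c
    simp only [hT, map_sub, LinearMap.sub_apply]
    rw [C.pair_comm b (D a c)] at hm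
    rw [C.pair_comm b (C.bracket a c)] at hr
    linear_combination hr - hm
  have cyc : ∀ a b c : E, T a b c = T b c a := by
    intro a b c
    rw [key12 a b c, key23 b a c]; ring
  have keyW : ∀ (a b c : E) (f : R), T a b (f • c) = f * T a b c := by
    intro a b c f
    simp only [hT, hD_smul_left, map_smul, LinearMap.smul_apply, smul_eq_mul, mul_add]
  refine ⟨key12 u v w, key23 u v w, ?_, ?_, keyW u v w f⟩
  · rw [cyc (f • u) v w, keyW v w u f, cyc u v w]
  · rw [cyc u (f • v) w, cyc (f • v) w u, keyW w u v f, ← cyc v w u, ← cyc u v w]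
end
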